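/- arXiv:2512.15797 — 5 statements merged into one kernel-verified Lean document; each statement's English description precedes it below -/
import Mathlib

section
/- For every natural number n, the function R defined by R x = (ln (E n x))/x for x ≠ 0 and R 0 = 1/(n+2) is increasing on all of ℝ. -/
/-- The `n`-th normalized remainder of the Maclaurin series of the exponential. -/
noncomputable def E (n : ℕ) (x : ℝ) : ℝ :=
  if x = 0 then 1
  else (Nat.factorial (n + 1)) / x ^ (n + 1) *
    (Real.exp x - ∑ k ∈ Finset.range (n + 1), x ^ k / (Nat.factorial k))

open MeasureTheory intervalIntegral Real

noncomputable def J (n : ℕ) (x : ℝ) : ℝ := ∫ t in (0:ℝ)..1, (1-t)^n * Real.exp (x*t)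

lemma contJ (n : ℕ) (x : ℝ) : Continuous (fun t : ℝ => (1-t)^n * Real.exp (x*t)) := by
  continuity

lemma J_ibp (n : ℕ) (x : ℝ) : ((n:ℝ)+1) * J n x = 1 + x * J (n+1) x := by
  have key : ∫ t in (0:ℝ)..1,
      (((n:ℝ)+1) * ((1-t)^n * Real.exp (x*t)) - x * ((1-t)^(n+1) * Real.exp (x*t)))
      = 1 := by
    have h : ∀ t ∈ Set.uIcc (0:ℝ) 1, HasDerivAt (fun t : ℝ => -(1-t)^(n+1) * Real.exp (x*t))
        (((n:ℝ)+1) * ((1-t)^n * Real.exp (x*t)) - x * ((1-t)^(n+1) * Real.exp (x*t))) t := by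
      intro t _
      have h1 : HasDerivAt (fun t : ℝ => -(1-t)^(n+1)) (((n:ℝ)+1) * (1-t)^n) t := by
        have : HasDerivAt (fun t : ℝ => (1:ℝ)-t) (-1) t := by
          simpa using (hasDerivAt_id t).const_sub 1
        have := (this.pow (n+1)).neg
        refine HasDerivAt.congr_deriv this ?_
        simp only [Nat.add_sub_cancel]; push_cast; ring
      have h2 : HasDerivAt (fun t : ℝ => Real.exp (x*t)) (x * Real.exp (x*t)) t := by
        have : HasDerivAt (fun t : ℝ => x*t) x t := by simpa using (hasDerivAt_id t).const_mul x
        exact ((Real.hasDerivAt_exp (x*t)).comp t this).congr_deriv (by ring)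
      refine (h1.mul h2).congr_deriv ?_
      ring
    have := intervalIntegral.integral_eq_sub_of_hasDerivAt h (by
      apply Continuous.intervalIntegrable; continuity)
    simpa using this
  have hsplit : ∫ t in (0:ℝ)..1,
      (((n:ℝ)+1) * ((1-t)^n * Real.exp (x*t)) - x * ((1-t)^(n+1) * Real.exp (x*t)))
      = ((n:ℝ)+1) * J n x - x * J (n+1) x := by
    rw [intervalIntegral.integral_sub, intervalIntegral.integral_const_mul,
      intervalIntegral.integral_const_mul] <;>
    · first
      | rfl
      | (apply Continuous.intervalIntegrable; continuity)
  rw [hsplit] at key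
  linarith

lemma J_rep (n : ℕ) (x : ℝ) :
    Real.exp x - ∑ k ∈ Finset.range (n+1), x ^ k / (Nat.factorial k)
      = x^(n+1) / (Nat.factorial n) * J n x := by
  induction n with
  | zero =>
      have hx1 : x * J 0 x = Real.exp x - 1 := by
        by_cases hx : x = 0
        · simp [hx, J]
        · have : J 0 x = x⁻¹ * (Real.exp x - 1) := by
            simp only [J, pow_zero, one_mul]
            rw [intervalIntegral.integral_comp_mul_left (fun u => Real.exp u) hx]
            simp [integral_exp, smul_eq_mul]
          rw [this]; field_simp
      simp only [Finset.sum_range_one, pow_zero, Nat.factorial_zero, Nat.cast_one, div_one,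
        zero_add, pow_one]
      linarith
  | succ m ih =>
      rw [Finset.sum_range_succ]
      have hibp := J_ibp m x
      have hfac : (Nat.factorial (m+1) : ℝ) = ((m:ℝ)+1) * Nat.factorial m := by
        push_cast [Nat.factorial_succ]; ring
      have hne : (Nat.factorial m : ℝ) ≠ 0 := by positivity
      have hne1 : ((m:ℝ)+1) ≠ 0 := by positivity
      have hJm : J m x = (1 + x * J (m+1) x) / ((m:ℝ)+1) := by
        field_simp; linarith
      have : x^(m+1+1) / (Nat.factorial (m+1)) * J (m+1) x
          = x^(m+1) / (Nat.factorial m) * J m x - x^(m+1) / (Nat.factorial (m+1)) := by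
        rw [hJm, hfac]
        field_simp
        ring
      rw [this, ← ih]
      ring

lemma integral_one_sub_pow (n : ℕ) : ∫ t in (0:ℝ)..1, (1-t)^n = 1/((n:ℝ)+1) := by
  rw [intervalIntegral.integral_comp_sub_left (fun u : ℝ => u^n) 1]
  simp [integral_pow]

lemma integral_t_one_sub_pow (n : ℕ) :
    ∫ t in (0:ℝ)..1, t*(1-t)^n = 1/(((n:ℝ)+1)*((n:ℝ)+2)) := by
  rw [show (∫ t in (0:ℝ)..1, t*(1-t)^n)
      = ∫ t in (0:ℝ)..1, (fun u : ℝ => (1-u)*u^n) (1-t) from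
    intervalIntegral.integral_congr (fun t _ => by simp)]
  rw [intervalIntegral.integral_comp_sub_left (fun u : ℝ => (1-u)*u^n) 1]
  norm_num
  rw [show (∫ u in (0:ℝ)..1, (1-u)*u^n) = ∫ u in (0:ℝ)..1, (u^n - u^(n+1)) from
    intervalIntegral.integral_congr (fun u _ => by ring)]
  rw [intervalIntegral.integral_sub (by apply Continuous.intervalIntegrable; continuity)
    (by apply Continuous.intervalIntegrable; continuity)]
  simp [integral_pow]
  have h1 : ((n:ℝ)+1) ≠ 0 := by positivity
  have h2 : ((n:ℝ)+2) ≠ 0 := by positivity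
  field_simp
  ring

lemma J_zero (n : ℕ) : J n 0 = 1/((n:ℝ)+1) := by
  have : J n 0 = ∫ t in (0:ℝ)..1, (1-t)^n := by
    unfold J
    apply intervalIntegral.integral_congr
    intro t _; simp
  rw [this, integral_one_sub_pow]

lemma E_eq (n : ℕ) (x : ℝ) : E n x = ((n:ℝ)+1) * J n x := by
  by_cases hx : x = 0
  · rw [hx]
    have h1 : ((n:ℝ)+1) ≠ 0 := by positivity
    simp [E, J_zero, h1]
  · have hfac : (Nat.factorial (n+1) : ℝ) = ((n:ℝ)+1) * Nat.factorial n := by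
      push_cast [Nat.factorial_succ]; ring
    have hne : (Nat.factorial n : ℝ) ≠ 0 := by positivity
    have hxp : x^(n+1) ≠ 0 := pow_ne_zero _ hx
    rw [E, if_neg hx, J_rep, hfac]
    field_simp

lemma J_pos (n : ℕ) (x : ℝ) : 0 < J n x := by
  apply intervalIntegral.intervalIntegral_pos_of_pos_on
    ((contJ n x).intervalIntegrable 0 1)
  · intro t ht
    have h1 : 0 < 1 - t := by linarith [ht.2]
    positivity
  · norm_num

lemma jensen (n : ℕ) (x : ℝ) : Real.exp (x/((n:ℝ)+2)) ≤ ((n:ℝ)+1) * J n x := by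
  set c : ℝ := 1/((n:ℝ)+2) with hc
  have h2 : ((n:ℝ)+2) ≠ 0 := by positivity
  have h1 : ((n:ℝ)+1) ≠ 0 := by positivity
  have hmono : (∫ t in (0:ℝ)..1, (1-t)^n * (Real.exp (x*c) * (x*(t-c)+1)))
      ≤ J n x := by
    apply intervalIntegral.integral_mono_on (by norm_num)
      (by apply Continuous.intervalIntegrable; continuity)
      ((contJ n x).intervalIntegrable 0 1)
    intro t ht
    have hbase : (0:ℝ) ≤ (1-t)^n := by
      have : (0:ℝ) ≤ 1 - t := by linarith [ht.2]
      positivity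
    apply mul_le_mul_of_nonneg_left _ hbase
    have := Real.add_one_le_exp (x*(t-c))
    calc Real.exp (x*c) * (x*(t-c)+1) ≤ Real.exp (x*c) * Real.exp (x*(t-c)) := by
          apply mul_le_mul_of_nonneg_left this (Real.exp_pos _).le
      _ = Real.exp (x*t) := by rw [← Real.exp_add]; ring_nf
  have hcomp : (∫ t in (0:ℝ)..1, (1-t)^n * (Real.exp (x*c) * (x*(t-c)+1)))
      = Real.exp (x*c) / ((n:ℝ)+1) := by
    rw [show (∫ t in (0:ℝ)..1, (1-t)^n * (Real.exp (x*c) * (x*(t-c)+1)))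
        = ∫ t in (0:ℝ)..1, ((Real.exp (x*c)*(1-x*c)) * (1-t)^n
            + (Real.exp (x*c)*x) * (t*(1-t)^n)) from
      intervalIntegral.integral_congr (fun t _ => by ring)]
    rw [intervalIntegral.integral_add
      (by apply Continuous.intervalIntegrable; continuity)
      (by apply Continuous.intervalIntegrable; continuity),
      intervalIntegral.integral_const_mul, intervalIntegral.integral_const_mul,
      integral_one_sub_pow, integral_t_one_sub_pow]
    rw [hc]
    field_simp
    ring
  rw [hcomp] at hmono
  have : Real.exp (x*c) = Real.exp (x/((n:ℝ)+2)) := by rw [hc]; ring_nf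
  rw [this] at hmono
  calc Real.exp (x/((n:ℝ)+2)) = ((n:ℝ)+1) * (Real.exp (x/((n:ℝ)+2)) / ((n:ℝ)+1)) := by
        field_simp
    _ ≤ ((n:ℝ)+1) * J n x := by
        apply mul_le_mul_of_nonneg_left hmono (by positivity)

lemma J_holder (n : ℕ) (x y : ℝ) {a b : ℝ} (ha : 0 < a) (hb : 0 < b) (hab : a + b = 1) :
    J n (a*x + b*y) ≤ (J n x)^a * (J n y)^b := by
  have ha1 : a < 1 := by linarith
  have hμ : ∀ z : ℝ, J n z = ∫ t in Set.Ioc (0:ℝ) 1, (1-t)^n * Real.exp (z*t) := by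
    intro z; rw [J, intervalIntegral.integral_of_le (by norm_num)]
  have hint : ∀ z : ℝ, IntegrableOn (fun t => (1-t)^n * Real.exp (z*t)) (Set.Ioc (0:ℝ) 1) := by
    intro z
    exact ((contJ n z).intervalIntegrable 0 1).1
  have hnn : ∀ z : ℝ, ∀ t ∈ Set.Ioc (0:ℝ) 1, 0 ≤ (1-t)^n * Real.exp (z*t) := by
    intro z t ht
    have h1t : (0:ℝ) ≤ 1 - t := by linarith [ht.2]
    positivity
  have hofReal : ∀ z : ℝ, ENNReal.ofReal (J n z)
      = ∫⁻ t in Set.Ioc (0:ℝ) 1, ENNReal.ofReal ((1-t)^n * Real.exp (z*t)) := by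
    intro z
    rw [hμ]
    exact MeasureTheory.ofReal_integral_eq_lintegral_ofReal (hint z)
      ((ae_restrict_iff' measurableSet_Ioc).2 (Filter.Eventually.of_forall (hnn z)))
  have hmeas : ∀ z : ℝ, AEMeasurable (fun t : ℝ => ENNReal.ofReal ((1-t)^n * Real.exp (z*t)))
      (volume.restrict (Set.Ioc (0:ℝ) 1)) := by
    intro z
    exact ((contJ n z).measurable.ennreal_ofReal).aemeasurable
  have hpq : (1/a).HolderConjugate (1/b) := by
    rw [Real.holderConjugate_iff]
    constructor
    · exact (one_lt_one_div ha ha1)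
    · simp only [one_div, inv_inv]; exact hab
  have H := ENNReal.lintegral_mul_le_Lp_mul_Lq (μ := volume.restrict (Set.Ioc (0:ℝ) 1)) hpq
    ((hmeas x).pow_const a) ((hmeas y).pow_const b)
  -- simplify the RHS of H
  have hsimp : ∀ (z c : ℝ), 0 < c →
      (∫⁻ t in Set.Ioc (0:ℝ) 1,
        (ENNReal.ofReal ((1-t)^n * Real.exp (z*t)) ^ c) ^ ((1:ℝ)/c)) ^ ((1:ℝ)/((1:ℝ)/c))
      = ENNReal.ofReal (J n z) ^ c := by
    intro z c hc
    have h1 : ∀ w : ENNReal, (w ^ c) ^ ((1:ℝ)/c) = w := by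
      intro w
      rw [← ENNReal.rpow_mul, mul_one_div_cancel hc.ne', ENNReal.rpow_one]
    simp_rw [h1]
    rw [one_div_one_div, hofReal]
  have key : ENNReal.ofReal (J n (a*x + b*y)) ≤
      ENNReal.ofReal (J n x) ^ a * ENNReal.ofReal (J n y) ^ b := by
    rw [hofReal]
    have hcong : (∫⁻ t in Set.Ioc (0:ℝ) 1,
          ENNReal.ofReal ((1-t)^n * Real.exp ((a*x+b*y)*t)))
        = ∫⁻ t in Set.Ioc (0:ℝ) 1,
          (ENNReal.ofReal ((1-t)^n * Real.exp (x*t)) ^ a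
            * ENNReal.ofReal ((1-t)^n * Real.exp (y*t)) ^ b) := by
      apply lintegral_congr_ae
      refine (ae_restrict_iff' measurableSet_Ioc).2 (Filter.Eventually.of_forall ?_)
      intro t ht
      have h1t : (0:ℝ) ≤ 1 - t := by linarith [ht.2]
      have hpow : (0:ℝ) ≤ (1-t)^n := by positivity
      dsimp only
      rw [ENNReal.ofReal_rpow_of_nonneg (by positivity) ha.le,
          ENNReal.ofReal_rpow_of_nonneg (by positivity) hb.le,
          ← ENNReal.ofReal_mul (by positivity)]
      congr 1
      rw [Real.mul_rpow hpow (Real.exp_pos _).le, Real.mul_rpow hpow (Real.exp_pos _).le]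
      rw [← Real.exp_mul, ← Real.exp_mul]
      calc (1-t)^n * Real.exp ((a*x+b*y)*t)
          = ((1-t)^n)^(a+b) * (Real.exp (x*t*a) * Real.exp (y*t*b)) := by
            rw [hab, Real.rpow_one, ← Real.exp_add]; ring_nf
        _ = ((1-t)^n)^a * Real.exp (x*t*a) * (((1-t)^n)^b * Real.exp (y*t*b)) := by
            rw [Real.rpow_add' hpow (by rw [hab]; norm_num)]; ring
    rw [hcong]
    calc (∫⁻ t in Set.Ioc (0:ℝ) 1,
          (ENNReal.ofReal ((1-t)^n * Real.exp (x*t)) ^ a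
            * ENNReal.ofReal ((1-t)^n * Real.exp (y*t)) ^ b))
        ≤ (∫⁻ t in Set.Ioc (0:ℝ) 1,
            (ENNReal.ofReal ((1-t)^n * Real.exp (x*t)) ^ a) ^ ((1:ℝ)/a)) ^ ((1:ℝ)/((1:ℝ)/a))
          * (∫⁻ t in Set.Ioc (0:ℝ) 1,
            (ENNReal.ofReal ((1-t)^n * Real.exp (y*t)) ^ b) ^ ((1:ℝ)/b)) ^ ((1:ℝ)/((1:ℝ)/b)) := by
          exact H
      _ = ENNReal.ofReal (J n x) ^ a * ENNReal.ofReal (J n y) ^ b := by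
          rw [hsimp x a ha, hsimp y b hb]
  have hJx := J_pos n x
  have hJy := J_pos n y
  have hrhs : ENNReal.ofReal (J n x) ^ a * ENNReal.ofReal (J n y) ^ b
      = ENNReal.ofReal ((J n x)^a * (J n y)^b) := by
    rw [ENNReal.ofReal_rpow_of_nonneg hJx.le ha.le,
        ENNReal.ofReal_rpow_of_nonneg hJy.le hb.le,
        ← ENNReal.ofReal_mul (by positivity)]
  rw [hrhs] at key
  exact (ENNReal.ofReal_le_ofReal_iff (by positivity)).1 key

lemma convex_logE (n : ℕ) : ConvexOn ℝ Set.univ (fun x => Real.log (E n x)) := by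
  refine ⟨convex_univ, ?_⟩
  intro x _ y _ a b ha hb hab
  simp only [smul_eq_mul]
  rcases eq_or_lt_of_le ha with ha0 | ha0
  · have hb1 : b = 1 := by linarith
    simp [← ha0, hb1]
  rcases eq_or_lt_of_le hb with hb0 | hb0
  · have ha1 : a = 1 := by linarith
    simp [← hb0, ha1]
  have hn1 : (0:ℝ) < (n:ℝ)+1 := by positivity
  have hJ := J_holder n x y ha0 hb0 hab
  have hJx := J_pos n x
  have hJy := J_pos n y
  have hJz := J_pos n (a*x+b*y)
  rw [E_eq, E_eq, E_eq]
  calc Real.log (((n:ℝ)+1) * J n (a*x+b*y))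
      ≤ Real.log (((n:ℝ)+1) * ((J n x)^a * (J n y)^b)) := by
        apply Real.log_le_log (by positivity)
        exact mul_le_mul_of_nonneg_left hJ hn1.le
    _ = a * Real.log (((n:ℝ)+1) * J n x) + b * Real.log (((n:ℝ)+1) * J n y) := by
        rw [Real.log_mul hn1.ne' (by positivity),
          Real.log_mul (by positivity) (by positivity),
          Real.log_rpow hJx, Real.log_rpow hJy,
          Real.log_mul hn1.ne' hJx.ne', Real.log_mul hn1.ne' hJy.ne']
        linear_combination Real.log ((n:ℝ)+1) * hab.symm

lemma logE_lower (n : ℕ) (x : ℝ) : x/((n:ℝ)+2) ≤ Real.log (E n x) := by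
  have h := jensen n x
  have := Real.log_le_log (Real.exp_pos _) h
  rwa [Real.log_exp, ← E_eq] at this

theorem log_E_div_monotone (n : ℕ) :
    Monotone (fun x : ℝ => if x = 0 then (1 : ℝ) / (n + 2) else Real.log (E n x) / x) := by
  have hn2 : (0:ℝ) < (n:ℝ)+2 := by positivity
  have hE0 : Real.log (E n 0) = 0 := by simp [E]
  intro x y hxy
  simp only
  by_cases hx : x = 0 <;> by_cases hy : y = 0
  · simp [hx, hy]
  · rw [if_pos hx, if_neg hy]
    have hy0 : 0 < y := lt_of_le_of_ne (hx ▸ hxy) (Ne.symm hy)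
    rw [le_div_iff₀ hy0]
    have := logE_lower n y
    calc 1 / ((n:ℝ) + 2) * y = y / ((n:ℝ)+2) := by ring
      _ ≤ Real.log (E n y) := this
  · rw [if_neg hx, if_pos hy]
    have hx0 : x < 0 := lt_of_le_of_ne (hy ▸ hxy) hx
    rw [div_le_iff_of_neg hx0]
    have := logE_lower n x
    calc 1 / ((n:ℝ) + 2) * x = x / ((n:ℝ)+2) := by ring
      _ ≤ Real.log (E n x) := this
  · rw [if_neg hx, if_neg hy]
    have := (convex_logE n).secant_mono (Set.mem_univ 0) (Set.mem_univ x) (Set.mem_univ y)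
      hx hy hxy
    simpa [hE0] using this
end

section
/- For every positive integer n and every real x, the inequality (∑_{j=0}^∞ (1/C(n+j+2, n)) x^j/j!) · (∑_{j=0}^∞ (1/C(n+j, n)) x^j/j!) ≥ (∑_{j=0}^∞ (1/C(n+j+1, n)) x^j/j!)² holds, where C(a, b) denotes the binomial coefficient a choose b. -/
open MeasureTheory Finset

lemma prod_fac (a : ℕ) : ∀ k : ℕ,
    a.factorial * ∏ j ∈ Finset.range k, (a + 1 + j) = (a + k).factorial
  | 0 => by simp
  | k + 1 => by
    rw [Finset.prod_range_succ, ← mul_assoc, prod_fac a k,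
      show a + (k + 1) = (a + k) + 1 from rfl, Nat.factorial_succ]
    ring

lemma beta_nat (a b : ℕ) :
    ∫ t in (0:ℝ)..1, t ^ a * (1 - t) ^ b
      = (a.factorial * b.factorial : ℝ) / (a + b + 1).factorial := by
  have hu : 0 < Complex.re ((a : ℂ) + 1) := by
    simp [Complex.add_re]
    positivity
  have h := Complex.betaIntegral_eval_nat_add_one_right hu b
  have h1 : Complex.betaIntegral ((a : ℂ) + 1) ((b : ℕ) + 1)
      = ((∫ t in (0:ℝ)..1, t ^ a * (1 - t) ^ b : ℝ) : ℂ) := by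
    rw [Complex.betaIntegral, ← intervalIntegral.integral_ofReal]
    refine intervalIntegral.integral_congr fun t _ => ?_
    push_cast
    rw [add_sub_cancel_right, add_sub_cancel_right, Complex.cpow_natCast,
      Complex.cpow_natCast]
  have h2 : (∏ j ∈ Finset.range (b + 1), ((a : ℂ) + 1 + j))
      = ((a + b + 1).factorial : ℂ) / (a.factorial : ℂ) := by
    have := prod_fac a (b + 1)
    have ha : (a.factorial : ℂ) ≠ 0 := Nat.cast_ne_zero.mpr a.factorial_ne_zero
    field_simp
    rw [mul_comm]
    rw [show a + (b + 1) = a + b + 1 by ring] at this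
    exact_mod_cast this
  rw [h1, h2] at h
  have h' : ((∫ t in (0:ℝ)..1, t ^ a * (1 - t) ^ b : ℝ) : ℂ)
      = (((a.factorial * b.factorial : ℝ) / (a + b + 1).factorial : ℝ) : ℂ) := by
    rw [h, div_div_eq_mul_div]; push_cast; ring
  exact_mod_cast h'

lemma choose_inv (n : ℕ) (hn : 0 < n) (k : ℕ) :
    (1 / (Nat.choose (n + k) n : ℝ))
      = (n : ℝ) * ∫ t in (0:ℝ)..1, t ^ k * (1 - t) ^ (n - 1) := by
  rw [beta_nat k (n - 1), show k + (n - 1) + 1 = n + k by omega]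
  have hc := Nat.choose_mul_factorial_mul_factorial (Nat.le_add_right n k)
  rw [Nat.add_sub_cancel_left] at hc
  have hC : ((n + k).choose n : ℝ) * n.factorial * k.factorial = (n + k).factorial := by
    exact_mod_cast hc
  have hfac : (n : ℝ) * (n - 1).factorial = n.factorial := by
    exact_mod_cast Nat.mul_factorial_pred hn.ne'
  have hCnz : ((n + k).choose n : ℝ) ≠ 0 :=
    Nat.cast_ne_zero.mpr (Nat.choose_pos (Nat.le_add_right n k)).ne'
  have h1 : ((n + k).factorial : ℝ) ≠ 0 := Nat.cast_ne_zero.mpr (Nat.factorial_ne_zero _)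
  have key : (1 : ℝ) / ((n + k).choose n : ℝ)
      = ((n.factorial : ℝ) * k.factorial) / (n + k).factorial := by
    rw [div_eq_div_iff hCnz h1]
    linear_combination -hC
  rw [key, ← hfac]
  ring

lemma series_eq (n : ℕ) (hn : 0 < n) (x : ℝ) (m : ℕ) :
    (∑' j : ℕ, (1 / (Nat.choose (n + j + m) n : ℝ)) * x ^ j / (Nat.factorial j))
      = ∫ t in Set.Ioc (0:ℝ) 1,
          ((n : ℝ) * ((1 - t) ^ (n - 1) * Real.exp (x * t))) * t ^ m := by
  set F : ℕ → ℝ → ℝ := fun j t =>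
    ((n : ℝ) * (x ^ j / (Nat.factorial j))) * (t ^ (j + m) * (1 - t) ^ (n - 1)) with hF
  have hFc : ∀ j, Continuous (F j) := fun j => by fun_prop
  have hFint : ∀ j, IntegrableOn (F j) (Set.Ioc (0:ℝ) 1) := fun j => (hFc j).integrableOn_Ioc
  have hterm : ∀ j, (1 / (Nat.choose (n + j + m) n : ℝ)) * x ^ j / (Nat.factorial j)
      = ∫ t in Set.Ioc (0:ℝ) 1, F j t := by
    intro j
    have h := choose_inv n hn (j + m)
    rw [intervalIntegral.integral_of_le zero_le_one] at h
    rw [show n + j + m = n + (j + m) by ring, h, hF]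
    simp only []
    rw [MeasureTheory.integral_const_mul]
    ring
  have hsum : Summable fun j => ∫ t in Set.Ioc (0:ℝ) 1, ‖F j t‖ := by
    refine Summable.of_nonneg_of_le
      (fun j => MeasureTheory.integral_nonneg fun t => norm_nonneg _)
      (fun j => ?_) ((Real.summable_pow_div_factorial |x|).mul_left (n : ℝ))
    have hb : ∀ t ∈ Set.Ioc (0:ℝ) 1, ‖F j t‖ ≤ (n : ℝ) * (|x| ^ j / j.factorial) := by
      intro t ht
      have h0 : (0:ℝ) ≤ t := le_of_lt ht.1
      have h1 : t ≤ 1 := ht.2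
      have e1 : t ^ (j + m) ≤ 1 := pow_le_one₀ h0 h1
      have e2 : (1 - t) ^ (n - 1) ≤ 1 := pow_le_one₀ (by linarith) (by linarith)
      have e1' : 0 ≤ t ^ (j + m) := pow_nonneg h0 _
      have e2' : 0 ≤ (1 - t) ^ (n - 1) := pow_nonneg (by linarith) _
      have : ‖F j t‖ = ((n : ℝ) * (|x| ^ j / j.factorial)) * (t ^ (j + m) * (1 - t) ^ (n - 1)) := by
        rw [hF]
        simp only [Real.norm_eq_abs, abs_mul, abs_div, abs_pow, Nat.abs_cast,
          abs_of_nonneg h0, abs_of_nonneg (by linarith : (0:ℝ) ≤ 1 - t)]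
      rw [this]
      have hc : (0:ℝ) ≤ (n : ℝ) * (|x| ^ j / j.factorial) := by positivity
      nlinarith [mul_le_one₀ e1 e2' e2]
    calc (∫ t in Set.Ioc (0:ℝ) 1, ‖F j t‖)
        ≤ ∫ _t in Set.Ioc (0:ℝ) 1, (n : ℝ) * (|x| ^ j / j.factorial) := by
          refine MeasureTheory.setIntegral_mono_on (hFint j).norm
            (MeasureTheory.integrableOn_const (by simp [Real.volume_Ioc])) measurableSet_Ioc hb
      _ = (n : ℝ) * (|x| ^ j / j.factorial) := by
          simp [Real.volume_Ioc]
  calc (∑' j : ℕ, (1 / (Nat.choose (n + j + m) n : ℝ)) * x ^ j / (Nat.factorial j))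
      = ∑' j : ℕ, ∫ t in Set.Ioc (0:ℝ) 1, F j t := tsum_congr hterm
    _ = ∫ t in Set.Ioc (0:ℝ) 1, (∑' j : ℕ, F j t) :=
        MeasureTheory.integral_tsum_of_summable_integral_norm hFint hsum
    _ = ∫ t in Set.Ioc (0:ℝ) 1,
          ((n : ℝ) * ((1 - t) ^ (n - 1) * Real.exp (x * t))) * t ^ m := by
        refine MeasureTheory.integral_congr_ae (Filter.Eventually.of_forall fun t => ?_)
        dsimp only
        have h1 : ∀ j : ℕ, F j t
            = ((n : ℝ) * ((1 - t) ^ (n - 1) * t ^ m)) * ((x * t) ^ j / (Nat.factorial j)) := by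
          intro j
          rw [hF]
          simp only []
          rw [pow_add, mul_pow]
          ring
        rw [tsum_congr h1, tsum_mul_left]
        have he : Real.exp (x * t) = ∑' j : ℕ, (x * t) ^ j / (Nat.factorial j) := by
          rw [Real.exp_eq_exp_ℝ, NormedSpace.exp_eq_tsum_div]
        rw [← he]
        ring

theorem binom_series_sq_ineq (n : ℕ) (hn : 0 < n) (x : ℝ) :
    (∑' j : ℕ, (1 / (Nat.choose (n + j + 2) n : ℝ)) * x ^ j / (Nat.factorial j)) *
      (∑' j : ℕ, (1 / (Nat.choose (n + j) n : ℝ)) * x ^ j / (Nat.factorial j)) ≥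
    (∑' j : ℕ, (1 / (Nat.choose (n + j + 1) n : ℝ)) * x ^ j / (Nat.factorial j)) ^ 2 := by
  have h0 : (∑' j : ℕ, (1 / (Nat.choose (n + j) n : ℝ)) * x ^ j / (Nat.factorial j))
      = ∫ t in Set.Ioc (0:ℝ) 1,
          ((n : ℝ) * ((1 - t) ^ (n - 1) * Real.exp (x * t))) * t ^ 0 := by
    simpa using series_eq n hn x 0
  rw [series_eq n hn x 2, series_eq n hn x 1, h0]
  set w : ℝ → ℝ := fun t => (n : ℝ) * ((1 - t) ^ (n - 1) * Real.exp (x * t)) with hw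
  have hwc : Continuous w := by fun_prop
  have hwnn : ∀ t ∈ Set.Ioc (0:ℝ) 1, 0 ≤ w t := by
    intro t ht
    have : (0:ℝ) ≤ 1 - t := by linarith [ht.2]
    positivity
  have hint : ∀ k : ℕ, MeasureTheory.IntegrableOn
      (fun t => w t * t ^ k) (Set.Ioc (0:ℝ) 1) := fun k =>
    (Continuous.mul hwc (continuous_pow k)).integrableOn_Ioc
  set A := ∫ t in Set.Ioc (0:ℝ) 1, w t * t ^ 2 with hA
  set B := ∫ t in Set.Ioc (0:ℝ) 1, w t * t ^ 1 with hB
  set C := ∫ t in Set.Ioc (0:ℝ) 1, w t * t ^ 0 with hC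
  have hCpos : 0 < C := by
    rw [hC, ← intervalIntegral.integral_of_le zero_le_one]
    refine intervalIntegral.intervalIntegral_pos_of_pos_on
      ((Continuous.mul hwc (continuous_pow 0)).intervalIntegrable 0 1) ?_ zero_lt_one
    intro t ht
    have h1 : (0:ℝ) < 1 - t := by linarith [ht.2]
    have h2 : 0 < w t := by rw [hw]; positivity
    simpa using h2
  have key : ∀ c : ℝ, 0 ≤ A - 2 * c * B + c ^ 2 * C := by
    intro c
    have hnn : 0 ≤ ∫ t in Set.Ioc (0:ℝ) 1, w t * (t - c) ^ 2 :=
      MeasureTheory.setIntegral_nonneg measurableSet_Ioc fun t ht =>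
        mul_nonneg (hwnn t ht) (sq_nonneg _)
    have expand : (∫ t in Set.Ioc (0:ℝ) 1, w t * (t - c) ^ 2)
        = A - 2 * c * B + c ^ 2 * C := by
      have e : (fun t => w t * (t - c) ^ 2)
          = fun t => (w t * t ^ 2 - (2 * c) * (w t * t ^ 1)) + c ^ 2 * (w t * t ^ 0) :=
        funext fun t => by ring
      have hi1 : MeasureTheory.IntegrableOn
          (fun t => w t * t ^ 2 - 2 * c * (w t * t ^ 1)) (Set.Ioc (0:ℝ) 1) :=
        (hint 2).sub ((hint 1).const_mul (2 * c))
      have hi2 : MeasureTheory.IntegrableOn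
          (fun t => c ^ 2 * (w t * t ^ 0)) (Set.Ioc (0:ℝ) 1) :=
        (hint 0).const_mul (c ^ 2)
      have hi3 : MeasureTheory.IntegrableOn
          (fun t => 2 * c * (w t * t ^ 1)) (Set.Ioc (0:ℝ) 1) :=
        (hint 1).const_mul (2 * c)
      rw [e, MeasureTheory.integral_add hi1 hi2,
        MeasureTheory.integral_sub (hint 2) hi3,
        MeasureTheory.integral_const_mul, MeasureTheory.integral_const_mul]
    linarith [expand ▸ hnn]
  have hfin : B ^ 2 ≤ A * C := by
    have h := key (B / C)
    have e1 : (B / C) ^ 2 * C = B ^ 2 / C := by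
      field_simp
    have e2 : 2 * (B / C) * B = 2 * (B ^ 2 / C) := by
      field_simp
    rw [e1, e2] at h
    have h2 : B ^ 2 / C ≤ A := by linarith
    exact (div_le_iff₀ hCpos).mp h2
  exact hfin
end

section
/- For every natural number n ≥ 0 and every real x, the strict inequality (∑_{j=0}^∞ (1/C(j+n+2, n+1)) x^j/j!) · (∑_{j=0}^∞ (1/C(j+n, n)) x^j/j!) < (∑_{j=0}^∞ (1/C(j+n+1, n+1)) x^j/j!) · (∑_{j=0}^∞ (1/C(j+n+1, n)) x^j/j!) holds, where C(a, b) denotes the binomial coefficient a choose b. -/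
open MeasureTheory intervalIntegral Set

noncomputable def Eser (m : ℕ) (x : ℝ) : ℝ := ∑' j : ℕ, x ^ j / (Nat.factorial (j + m))

lemma exp_tsum (y : ℝ) : Real.exp y = ∑' j : ℕ, y ^ j / (Nat.factorial j) := by
  rw [Real.exp_eq_exp_ℝ, NormedSpace.exp_eq_tsum_div]

lemma Eser_summable (m : ℕ) (x : ℝ) :
    Summable (fun j : ℕ => x ^ j / (Nat.factorial (j + m))) := by
  apply Summable.of_norm_bounded (Real.summable_pow_div_factorial |x|)
  intro j
  rw [norm_div, norm_pow, Real.norm_eq_abs, Real.norm_natCast, ← abs_pow, abs_pow]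
  gcongr
  exact Nat.le_add_right j m

lemma beta_int (k j : ℕ) : ∫ t in (0:ℝ)..1, t ^ j * (1 - t) ^ k
    = (Nat.factorial j) * (Nat.factorial k) / (Nat.factorial (j + k + 1)) := by
  induction k generalizing j with
  | zero =>
    simp only [pow_zero, mul_one, integral_pow, one_pow, Nat.factorial_zero,
      Nat.cast_one, zero_pow (Nat.succ_ne_zero j)]
    have e1 : ((j + 0 + 1).factorial : ℝ) = (j + 1) * j.factorial := by
      rw [show j+0+1 = j+1 from rfl, Nat.factorial_succ]; push_cast; ring
    rw [e1, eq_div_iff (by positivity)]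
    field_simp
    norm_num
  | succ k ih =>
    have hsplit : ∀ t : ℝ, t ^ j * (1 - t) ^ (k + 1)
        = t ^ j * (1 - t) ^ k - t ^ (j + 1) * (1 - t) ^ k := by
      intro t; ring
    rw [intervalIntegral.integral_congr (fun t _ => hsplit t)]
    rw [intervalIntegral.integral_sub
      ((by fun_prop : Continuous fun t : ℝ => t ^ j * (1 - t) ^ k).intervalIntegrable 0 1)
      ((by fun_prop : Continuous fun t : ℝ => t ^ (j + 1) * (1 - t) ^ k).intervalIntegrable 0 1)]
    rw [ih j, ih (j + 1)]
    have h1 : (j + 1) + k + 1 = j + (k + 1) + 1 := by ring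
    rw [h1]
    have hpos1 : (0:ℝ) < Nat.factorial (j + k + 1) := by positivity
    have hpos2 : (0:ℝ) < Nat.factorial (j + (k + 1) + 1) := by positivity
    have hfac : (Nat.factorial (j + (k+1) + 1) : ℝ)
        = (j + k + 2) * Nat.factorial (j + k + 1) := by
      have : j + (k+1) + 1 = (j + k + 1) + 1 := by ring
      rw [this, Nat.factorial_succ]; push_cast; ring
    have e1 : ((j + 1).factorial : ℝ) = (j + 1) * j.factorial := by
      rw [Nat.factorial_succ]; push_cast; ring
    have e2 : ((k + 1).factorial : ℝ) = (k + 1) * k.factorial := by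
      rw [Nat.factorial_succ]; push_cast; ring
    rw [hfac, e1, e2]
    have hc : ((j + k + 1).factorial : ℝ) ≠ 0 := ne_of_gt hpos1
    have hd : ((j:ℝ) + k + 2) ≠ 0 := by positivity
    field_simp
    ring

lemma Erep (k : ℕ) (x : ℝ) :
    ∫ t in (0:ℝ)..1, Real.exp (x * t) * (1 - t) ^ k
      = (Nat.factorial k) * Eser (k + 1) x := by
  rw [intervalIntegral.integral_of_le zero_le_one]
  set F : ℕ → ℝ → ℝ := fun j t => x ^ j / (Nat.factorial j) * (t ^ j * (1 - t) ^ k) with hF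
  have hFint : ∀ j, Integrable (F j) (volume.restrict (Ioc (0:ℝ) 1)) := by
    intro j
    exact (Continuous.integrableOn_Ioc (by fun_prop))
  have hFnorm : ∀ j, ∫ t in Ioc (0:ℝ) 1, ‖F j t‖ ≤ |x| ^ j / (Nat.factorial j) := by
    intro j
    have h1 : ∫ t in Ioc (0:ℝ) 1, (|x| ^ j / (Nat.factorial j) : ℝ)
        = |x| ^ j / (Nat.factorial j) := by
      rw [MeasureTheory.setIntegral_const, Real.volume_real_Ioc]
      norm_num
    rw [← h1]
    apply MeasureTheory.setIntegral_mono_on (hFint j).norm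
      (integrableOn_const (by simp [Real.volume_Ioc]))
      measurableSet_Ioc
    intro t ht
    have ht0 : 0 ≤ t := le_of_lt ht.1
    have ht1 : t ≤ 1 := ht.2
    rw [hF]
    simp only [norm_mul, norm_div, norm_pow, Real.norm_eq_abs, Nat.abs_cast]
    have e1 : |t| ^ j ≤ 1 := pow_le_one₀ (abs_nonneg t) (abs_le.2 ⟨by linarith, ht1⟩)
    have e2 : |1 - t| ^ k ≤ 1 := pow_le_one₀ (abs_nonneg _) (abs_le.2 ⟨by linarith, by linarith⟩)
    calc |x| ^ j / (Nat.factorial j) * (|t| ^ j * |1 - t| ^ k)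
        ≤ |x| ^ j / (Nat.factorial j) * (1 * 1) := by
          apply mul_le_mul_of_nonneg_left (mul_le_mul e1 e2 (by positivity) zero_le_one)
          positivity
      _ = |x| ^ j / (Nat.factorial j) := by ring
  have hsum : Summable fun j => ∫ t in Ioc (0:ℝ) 1, ‖F j t‖ := by
    apply Summable.of_nonneg_of_le
      (fun j => integral_nonneg (fun t => norm_nonneg _)) hFnorm
      (Real.summable_pow_div_factorial |x|)
  have hswap := MeasureTheory.integral_tsum_of_summable_integral_norm hFint hsum
  have hpt : ∀ t : ℝ, (∑' j, F j t) = Real.exp (x * t) * (1 - t) ^ k := by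
    intro t
    have : ∀ j : ℕ, F j t = ((x * t) ^ j / (Nat.factorial j)) * (1 - t) ^ k := by
      intro j; rw [hF]; simp only [mul_pow]; ring
    rw [tsum_congr this, tsum_mul_right, ← exp_tsum]
  have heq : ∫ t in Ioc (0:ℝ) 1, Real.exp (x * t) * (1 - t) ^ k
      = ∑' j, ∫ t in Ioc (0:ℝ) 1, F j t := by
    rw [hswap]
    apply MeasureTheory.setIntegral_congr_fun measurableSet_Ioc
    intro t _
    exact (hpt t).symm
  rw [heq]
  have hval : ∀ j : ℕ, ∫ t in Ioc (0:ℝ) 1, F j t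
      = (Nat.factorial k) * (x ^ j / (Nat.factorial (j + (k + 1)))) := by
    intro j
    rw [hF]
    simp only []
    rw [MeasureTheory.integral_const_mul, ← intervalIntegral.integral_of_le zero_le_one,
      beta_int]
    have h2 : j + k + 1 = j + (k + 1) := by ring
    rw [h2]
    have hj : (Nat.factorial j : ℝ) ≠ 0 := by positivity
    field_simp
  rw [tsum_congr hval, tsum_mul_left, Eser]

lemma Eser_pos (m : ℕ) (x : ℝ) : 0 < Eser m x := by
  cases m with
  | zero =>
    have h : Eser 0 x = Real.exp x := by
      rw [exp_tsum, Eser]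
      simp
    rw [h]; exact Real.exp_pos x
  | succ k =>
    have hint : 0 < ∫ t in (0:ℝ)..1, Real.exp (x * t) * (1 - t) ^ k := by
      apply intervalIntegral.intervalIntegral_pos_of_pos_on
        ((by fun_prop : Continuous fun t : ℝ => Real.exp (x * t) * (1 - t) ^ k).intervalIntegrable 0 1)
      · intro t ht
        exact mul_pos (Real.exp_pos _) (pow_pos (by linarith [ht.2]) k)
      · norm_num
    rw [Erep] at hint
    have hk : (0:ℝ) < Nat.factorial k := by positivity
    rcases mul_pos_iff.1 hint with ⟨_, h⟩ | ⟨h1, _⟩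
    · exact h
    · linarith

lemma cs_strict (k : ℕ) (x : ℝ) :
    (∫ t in (0:ℝ)..1, Real.exp (x * t) * (1 - t) ^ (k + 1)) ^ 2
      < (∫ t in (0:ℝ)..1, Real.exp (x * t) * (1 - t) ^ (k + 2))
        * (∫ t in (0:ℝ)..1, Real.exp (x * t) * (1 - t) ^ k) := by
  set a := ∫ t in (0:ℝ)..1, Real.exp (x * t) * (1 - t) ^ k with ha_def
  set b := ∫ t in (0:ℝ)..1, Real.exp (x * t) * (1 - t) ^ (k + 1) with hb_def
  set c := ∫ t in (0:ℝ)..1, Real.exp (x * t) * (1 - t) ^ (k + 2) with hc_def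
  have ha : 0 < a := by
    apply intervalIntegral.intervalIntegral_pos_of_pos_on
      ((by fun_prop : Continuous fun t : ℝ => Real.exp (x * t) * (1 - t) ^ k).intervalIntegrable 0 1)
    · intro t ht
      exact mul_pos (Real.exp_pos _) (pow_pos (by linarith [ht.2]) k)
    · norm_num
  set l := b / a with hl_def
  set g : ℝ → ℝ := fun t => Real.exp (x * t) * (1 - t) ^ k * ((1 - t) - l) ^ 2 with hg
  have hgc : Continuous g := by fun_prop
  have hq : ∫ t in (0:ℝ)..1, g t = c - 2 * l * b + l ^ 2 * a := by
    have hpt : ∀ t : ℝ, g t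
        = (Real.exp (x * t) * (1 - t) ^ (k + 2)
            - 2 * l * (Real.exp (x * t) * (1 - t) ^ (k + 1)))
          + l ^ 2 * (Real.exp (x * t) * (1 - t) ^ k) := by
      intro t; rw [hg]; ring
    rw [intervalIntegral.integral_congr (fun t _ => hpt t)]
    rw [intervalIntegral.integral_add
        (((by fun_prop : Continuous fun t : ℝ => Real.exp (x * t) * (1 - t) ^ (k + 2)).intervalIntegrable 0 1).sub
          (((by fun_prop : Continuous fun t : ℝ => Real.exp (x * t) * (1 - t) ^ (k + 1)).intervalIntegrable 0 1).const_mul _))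
        (((by fun_prop : Continuous fun t : ℝ => Real.exp (x * t) * (1 - t) ^ k).intervalIntegrable 0 1).const_mul _),
      intervalIntegral.integral_sub
        ((by fun_prop : Continuous fun t : ℝ => Real.exp (x * t) * (1 - t) ^ (k + 2)).intervalIntegrable 0 1)
        (((by fun_prop : Continuous fun t : ℝ => Real.exp (x * t) * (1 - t) ^ (k + 1)).intervalIntegrable 0 1).const_mul _),
      intervalIntegral.integral_const_mul, intervalIntegral.integral_const_mul]
  have hsplit : (∫ t in (0:ℝ)..(1/2:ℝ), g t) + (∫ t in (1/2:ℝ)..1, g t)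
      = ∫ t in (0:ℝ)..1, g t :=
    intervalIntegral.integral_add_adjacent_intervals
      (hgc.intervalIntegrable 0 (1/2)) (hgc.intervalIntegrable (1/2) 1)
  have hpos : 0 < ∫ t in (0:ℝ)..1, g t := by
    by_cases hl : 1 - l ≤ 1/2
    · have h2 : 0 < ∫ t in (1/2:ℝ)..1, g t := by
        apply intervalIntegral.intervalIntegral_pos_of_pos_on
          (hgc.intervalIntegrable (1/2) 1)
        · intro t ht
          rw [hg]
          have h1t : 0 < 1 - t := by linarith [ht.2]
          have hne : (1 - t) - l ≠ 0 := by
            have : 1 - t < 1/2 := by linarith [ht.1]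
            intro h; apply absurd h; intro h'; nlinarith
          exact mul_pos (mul_pos (Real.exp_pos _) (pow_pos h1t k))
            (pow_two_pos_of_ne_zero hne)
        · norm_num
      have h1 : 0 ≤ ∫ t in (0:ℝ)..(1/2:ℝ), g t := by
        apply intervalIntegral.integral_nonneg (by norm_num)
        intro t ht
        rw [hg]
        have : (0:ℝ) ≤ 1 - t := by
          rcases ht with ⟨_, h⟩; linarith
        positivity
      linarith
    · have h2 : 0 < ∫ t in (0:ℝ)..(1/2:ℝ), g t := by
        apply intervalIntegral.intervalIntegral_pos_of_pos_on
          (hgc.intervalIntegrable 0 (1/2))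
        · intro t ht
          rw [hg]
          have h1t : 0 < 1 - t := by linarith [ht.2]
          have hne : (1 - t) - l ≠ 0 := by
            have : 1/2 < 1 - t := by linarith [ht.2]
            intro h; apply absurd h; intro h'; nlinarith
          exact mul_pos (mul_pos (Real.exp_pos _) (pow_pos h1t k))
            (pow_two_pos_of_ne_zero hne)
        · norm_num
      have h1 : 0 ≤ ∫ t in (1/2:ℝ)..1, g t := by
        apply intervalIntegral.integral_nonneg (by norm_num)
        intro t ht
        rw [hg]
        have : (0:ℝ) ≤ 1 - t := by
          rcases ht with ⟨_, h⟩; linarith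
        positivity
      linarith
  rw [hq] at hpos
  have hla : l * a = b := by rw [hl_def]; field_simp
  nlinarith [hpos, ha, hla]

lemma key_ineq (n : ℕ) (x : ℝ) :
    (n : ℝ) * (Eser (n + 1) x) ^ 2 < (n + 1) * Eser (n + 2) x * Eser n x := by
  cases n with
  | zero =>
    simp only [Nat.cast_zero, zero_mul, zero_add, one_mul]
    exact mul_pos (Eser_pos 2 x) (Eser_pos 0 x)
  | succ k =>
    have cs := cs_strict k x
    rw [Erep k x, Erep (k + 1) x, Erep (k + 2) x] at cs
    set A := Eser (k + 1) x with hA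
    set B := Eser (k + 2) x with hB
    set C := Eser (k + 3) x with hC
    have hA0 : 0 < A := Eser_pos _ x
    have hB0 : 0 < B := Eser_pos _ x
    have hC0 : 0 < C := Eser_pos _ x
    -- cs : ((k+1)! * B)^2 < ((k+2)! * C) * (k! * A)
    have hf1 : ((k + 1).factorial : ℝ) = (k + 1) * k.factorial := by
      rw [Nat.factorial_succ]; push_cast; ring
    have hf2 : ((k + 2).factorial : ℝ) = (k + 2) * ((k + 1) * k.factorial) := by
      rw [show k + 2 = (k + 1) + 1 from rfl, Nat.factorial_succ, Nat.factorial_succ]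
      push_cast; ring
    rw [hf1, hf2] at cs
    have hk : (0:ℝ) < k.factorial := by positivity
    -- goal : (k+1) * B^2 < (k+2) * C * A
    push_cast
    have hpos2 : (0:ℝ) < (k + 1) * (k.factorial:ℝ) ^ 2 := by positivity
    have e1 : (((k:ℝ) + 1) * B ^ 2) * (((k:ℝ) + 1) * (k.factorial:ℝ) ^ 2)
        = (((k:ℝ) + 1) * (k.factorial:ℝ) * B) ^ 2 := by ring
    have e2 : (((k:ℝ) + 1 + 1) * C * A) * (((k:ℝ) + 1) * (k.factorial:ℝ) ^ 2)
        = ((k:ℝ) + 2) * (((k:ℝ) + 1) * (k.factorial:ℝ)) * C * ((k.factorial:ℝ) * A) := by ring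
    exact lt_of_mul_lt_mul_right (by rw [e1, e2]; exact cs) hpos2.le

theorem binom_series_strict_ineq (n : ℕ) (x : ℝ) :
    (∑' j : ℕ, (1 / (Nat.choose (j + n + 2) (n + 1) : ℝ)) * x ^ j / (Nat.factorial j)) *
      (∑' j : ℕ, (1 / (Nat.choose (j + n) n : ℝ)) * x ^ j / (Nat.factorial j)) <
    (∑' j : ℕ, (1 / (Nat.choose (j + n + 1) (n + 1) : ℝ)) * x ^ j / (Nat.factorial j)) *
      (∑' j : ℕ, (1 / (Nat.choose (j + n + 1) n : ℝ)) * x ^ j / (Nat.factorial j)) := by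
  have e1 : (∑' j : ℕ, (1 / (Nat.choose (j + n + 2) (n + 1) : ℝ)) * x ^ j / (Nat.factorial j))
      = ((n+1).factorial : ℝ) * Eser (n+1) x
        - (((n+1).factorial : ℝ) * ((n:ℝ)+1)) * Eser (n+2) x := by
    have hterm : ∀ j : ℕ, (1 / (Nat.choose (j + n + 2) (n + 1) : ℝ)) * x ^ j / (Nat.factorial j)
        = ((n+1).factorial : ℝ) * (x ^ j / ((j+n+1).factorial : ℝ))
          - (((n+1).factorial : ℝ) * ((n:ℝ)+1)) * (x ^ j / ((j+n+2).factorial : ℝ)) := by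
      intro j
      rw [Nat.cast_choose ℝ (by omega : n + 1 ≤ j + n + 2),
        show j + n + 2 - (n + 1) = j + 1 from by omega]
      have f1 : ((j+n+2).factorial : ℝ) = ((j:ℝ)+(n:ℝ)+2) * ((j+n+1).factorial : ℝ) := by
        rw [show j+n+2 = (j+n+1)+1 from rfl, Nat.factorial_succ]; push_cast; ring
      have f2 : ((j+1).factorial : ℝ) = ((j:ℝ)+1) * (j.factorial : ℝ) := by
        rw [Nat.factorial_succ]; push_cast; ring
      rw [f1, f2]
      have h1 : (0:ℝ) < (j.factorial : ℝ) := by positivity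
      have h2 : (0:ℝ) < ((j+n+1).factorial : ℝ) := by positivity
      have h3 : (0:ℝ) < ((n+1).factorial : ℝ) := by positivity
      have h4 : (0:ℝ) < (j:ℝ)+(n:ℝ)+2 := by positivity
      have h5 : (0:ℝ) < (j:ℝ)+1 := by positivity
      field_simp
      ring
    have hs1 : Summable (fun j : ℕ => ((n+1).factorial : ℝ) * (x ^ j / ((j+n+1).factorial : ℝ))) :=
      (Eser_summable (n+1) x).mul_left _
    have hs2 : Summable (fun j : ℕ => (((n+1).factorial : ℝ) * ((n:ℝ)+1)) * (x ^ j / ((j+n+2).factorial : ℝ))) :=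
      (Eser_summable (n+2) x).mul_left _
    rw [tsum_congr hterm, hs1.tsum_sub hs2, tsum_mul_left, tsum_mul_left]
    rfl
  have e2 : (∑' j : ℕ, (1 / (Nat.choose (j + n) n : ℝ)) * x ^ j / (Nat.factorial j))
      = (n.factorial : ℝ) * Eser n x := by
    have hterm : ∀ j : ℕ, (1 / (Nat.choose (j + n) n : ℝ)) * x ^ j / (Nat.factorial j)
        = (n.factorial : ℝ) * (x ^ j / ((j+n).factorial : ℝ)) := by
      intro j
      rw [Nat.cast_choose ℝ (by omega : n ≤ j + n),
        show j + n - n = j from by omega]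
      have h1 : (0:ℝ) < (j.factorial : ℝ) := by positivity
      have h2 : (0:ℝ) < ((j+n).factorial : ℝ) := by positivity
      have h3 : (0:ℝ) < (n.factorial : ℝ) := by positivity
      field_simp
    rw [tsum_congr hterm, tsum_mul_left]
    rfl
  have e3 : (∑' j : ℕ, (1 / (Nat.choose (j + n + 1) (n + 1) : ℝ)) * x ^ j / (Nat.factorial j))
      = ((n+1).factorial : ℝ) * Eser (n+1) x := by
    have hterm : ∀ j : ℕ, (1 / (Nat.choose (j + n + 1) (n + 1) : ℝ)) * x ^ j / (Nat.factorial j)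
        = ((n+1).factorial : ℝ) * (x ^ j / ((j+n+1).factorial : ℝ)) := by
      intro j
      rw [Nat.cast_choose ℝ (by omega : n + 1 ≤ j + n + 1),
        show j + n + 1 - (n + 1) = j from by omega]
      have h1 : (0:ℝ) < (j.factorial : ℝ) := by positivity
      have h2 : (0:ℝ) < ((j+n+1).factorial : ℝ) := by positivity
      have h3 : (0:ℝ) < ((n+1).factorial : ℝ) := by positivity
      field_simp
    rw [tsum_congr hterm, tsum_mul_left]
    rfl
  have e4 : (∑' j : ℕ, (1 / (Nat.choose (j + n + 1) n : ℝ)) * x ^ j / (Nat.factorial j))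
      = (n.factorial : ℝ) * Eser n x - ((n.factorial : ℝ) * (n:ℝ)) * Eser (n+1) x := by
    have hterm : ∀ j : ℕ, (1 / (Nat.choose (j + n + 1) n : ℝ)) * x ^ j / (Nat.factorial j)
        = (n.factorial : ℝ) * (x ^ j / ((j+n).factorial : ℝ))
          - ((n.factorial : ℝ) * (n:ℝ)) * (x ^ j / ((j+n+1).factorial : ℝ)) := by
      intro j
      rw [Nat.cast_choose ℝ (by omega : n ≤ j + n + 1),
        show j + n + 1 - n = j + 1 from by omega]
      have f1 : ((j+n+1).factorial : ℝ) = ((j:ℝ)+(n:ℝ)+1) * ((j+n).factorial : ℝ) := by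
        rw [show j+n+1 = (j+n)+1 from rfl, Nat.factorial_succ]; push_cast; ring
      have f2 : ((j+1).factorial : ℝ) = ((j:ℝ)+1) * (j.factorial : ℝ) := by
        rw [Nat.factorial_succ]; push_cast; ring
      rw [f1, f2]
      have h1 : (0:ℝ) < (j.factorial : ℝ) := by positivity
      have h2 : (0:ℝ) < ((j+n).factorial : ℝ) := by positivity
      have h3 : (0:ℝ) < (n.factorial : ℝ) := by positivity
      have h4 : (0:ℝ) < (j:ℝ)+(n:ℝ)+1 := by positivity
      have h5 : (0:ℝ) < (j:ℝ)+1 := by positivity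
      field_simp
      ring
    have hs1 : Summable (fun j : ℕ => (n.factorial : ℝ) * (x ^ j / ((j+n).factorial : ℝ))) :=
      (Eser_summable n x).mul_left _
    have hs2 : Summable (fun j : ℕ => ((n.factorial : ℝ) * (n:ℝ)) * (x ^ j / ((j+n+1).factorial : ℝ))) :=
      (Eser_summable (n+1) x).mul_left _
    rw [tsum_congr hterm, hs1.tsum_sub hs2, tsum_mul_left, tsum_mul_left]
    rfl
  rw [e1, e2, e3, e4]
  set A := Eser n x with hA
  set B := Eser (n+1) x with hB
  set C := Eser (n+2) x with hC
  have hkey := key_ineq n x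
  have hfacpos : (0:ℝ) < ((n+1).factorial : ℝ) * (n.factorial : ℝ) := by positivity
  have expand : ((n+1).factorial : ℝ) * B * ((n.factorial : ℝ) * A - ((n.factorial : ℝ) * (n:ℝ)) * B)
      - (((n+1).factorial : ℝ) * B - (((n+1).factorial : ℝ) * ((n:ℝ)+1)) * C) * ((n.factorial : ℝ) * A)
      = (((n+1).factorial : ℝ) * (n.factorial : ℝ)) * (((n:ℝ)+1) * C * A - (n:ℝ) * B ^ 2) := by
    ring
  have hprod : 0 < (((n+1).factorial : ℝ) * (n.factorial : ℝ))
      * (((n:ℝ)+1) * C * A - (n:ℝ) * B ^ 2) :=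
    mul_pos hfacpos (by linarith)
  linarith [expand, hprod]
end

section
/- For every positive integer n, the ratio t ↦ B_{2n-1}(t)/B_{2n+1}(t) of Bernoulli polynomials is strictly increasing on the open interval (0, 1/2) and strictly decreasing on the open interval (1/2, 1). -/
open Polynomial Set

/-- The classical Bernoulli polynomial `B_k` evaluated at a real number `t`. -/
noncomputable def bernPoly (k : ℕ) (t : ℝ) : ℝ :=
  Polynomial.aeval t (Polynomial.bernoulli k)

lemma bernPoly_eq_eval (k : ℕ) (t : ℝ) :
    bernPoly k t = ((Polynomial.bernoulli k).map (algebraMap ℚ ℝ)).eval t := by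
  rw [bernPoly, Polynomial.aeval_def, Polynomial.eval_map]

lemma hasDerivAt_bernPoly (k : ℕ) (t : ℝ) :
    HasDerivAt (bernPoly k) (k * bernPoly (k - 1) t) t := by
  have h := Polynomial.hasDerivAt ((Polynomial.bernoulli k).map (algebraMap ℚ ℝ)) t
  have e : Polynomial.derivative ((Polynomial.bernoulli k).map (algebraMap ℚ ℝ))
      = ((k : ℚ[X]) * Polynomial.bernoulli (k-1)).map (algebraMap ℚ ℝ) := by
    rw [Polynomial.derivative_map, Polynomial.derivative_bernoulli]
  rw [e] at h
  simp only [Polynomial.map_mul, Polynomial.map_natCast, Polynomial.eval_mul,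
    Polynomial.eval_natCast] at h
  have : ∀ x : ℝ, bernPoly k x = ((Polynomial.bernoulli k).map (algebraMap ℚ ℝ)).eval x :=
    fun x => bernPoly_eq_eval k x
  rw [← funext this] at h
  rwa [← bernPoly_eq_eval] at h

lemma bernPoly_one_eval (t : ℝ) : bernPoly 1 t = t - 1/2 := by
  rw [bernPoly]
  simp [Polynomial.bernoulli, Finset.sum_range_succ, Polynomial.aeval_monomial]
  ring

lemma bernoulli_comp_one_sub (n : ℕ) :
    (Polynomial.bernoulli n).comp (1 - X) = (-1 : ℚ[X]) ^ n * Polynomial.bernoulli n := by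
  induction n with
  | zero => simp
  | succ n ih =>
    set p : ℚ[X] := (Polynomial.bernoulli (n+1)).comp (1 - X)
        - (-1 : ℚ[X]) ^ (n+1) * Polynomial.bernoulli (n+1) with hp
    have hder : Polynomial.derivative p = 0 := by
      rw [hp]
      rw [Polynomial.derivative_sub, Polynomial.derivative_comp,
        Polynomial.derivative_bernoulli_add_one, Polynomial.derivative_mul,
        Polynomial.derivative_bernoulli_add_one]
      simp only [Nat.add_sub_cancel, Polynomial.derivative_sub, Polynomial.derivative_one,
        Polynomial.derivative_X, Polynomial.derivative_pow, Polynomial.derivative_neg,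
        Polynomial.mul_comp, Polynomial.add_comp, Polynomial.natCast_comp, Polynomial.one_comp, ih]
      ring
    have hc := Polynomial.eq_C_of_derivative_eq_zero hder
    have he : p.eval 0 = 0 := by
      rw [hp]
      simp only [Polynomial.eval_sub, Polynomial.eval_comp, Polynomial.eval_sub,
        Polynomial.eval_one, Polynomial.eval_X, Polynomial.eval_mul, Polynomial.eval_pow,
        Polynomial.eval_neg, Polynomial.eval_one, sub_zero,
        Polynomial.bernoulli_eval_one, Polynomial.bernoulli_eval_zero]
      rcases eq_or_ne (n+1) 1 with h1 | h1
      · rw [h1]; norm_num [bernoulli'_one, _root_.bernoulli_one]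
      · rw [bernoulli_eq_bernoulli'_of_ne_one h1]
        rcases Nat.even_or_odd (n+1) with he | ho
        · rw [he.neg_one_pow]; ring
        · rw [bernoulli'_eq_zero_of_odd ho (by omega), ho.neg_one_pow]; ring
    have : p = 0 := by
      rw [hc, Polynomial.coeff_zero_eq_eval_zero, he, map_zero]
    exact sub_eq_zero.mp this

lemma bernPoly_one_sub (k : ℕ) (t : ℝ) :
    bernPoly k (1 - t) = (-1) ^ k * bernPoly k t := by
  have h := congrArg (fun p : ℚ[X] => ((p.map (algebraMap ℚ ℝ)).eval t))
    (bernoulli_comp_one_sub k)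
  simp only [Polynomial.map_comp, Polynomial.map_sub, Polynomial.map_one, Polynomial.map_X,
    Polynomial.eval_comp, Polynomial.eval_sub, Polynomial.eval_one, Polynomial.eval_X,
    Polynomial.map_mul, Polynomial.map_pow, Polynomial.map_neg, Polynomial.eval_mul,
    Polynomial.eval_pow, Polynomial.eval_neg] at h
  rw [bernPoly_eq_eval, bernPoly_eq_eval]
  simpa using h

lemma bernPoly_odd_zero {n : ℕ} (hn : 1 ≤ n) : bernPoly (2*n+1) 0 = 0 := by
  rw [bernPoly_eq_eval, Polynomial.eval_zero_map, Polynomial.bernoulli_eval_zero,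
    bernoulli_eq_bernoulli'_of_ne_one (by omega),
    bernoulli'_eq_zero_of_odd ⟨n, by omega⟩ (by omega)]
  simp

lemma bernPoly_odd_half (n : ℕ) : bernPoly (2*n+1) (1/2 : ℝ) = 0 := by
  have h := bernPoly_one_sub (2*n+1) (1/2)
  norm_num [pow_succ, pow_mul] at h
  linarith

lemma signB (n : ℕ) : ∀ t ∈ Ioo (0:ℝ) (1/2), 0 < (-1)^(n+1) * bernPoly (2*n+1) t := by
  induction n with
  | zero =>
    intro t ht
    rw [bernPoly_one_eval]
    simpa using by linarith [ht.2]
  | succ n ih =>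
    intro t ht
    set g : ℝ → ℝ := fun t => (-1)^(n+2) * bernPoly (2*(n+1)+1) t with hg
    have hg' : ∀ x : ℝ, HasDerivAt g ((-1)^(n+2) * ((2*(n+1)+1) * bernPoly (2*(n+1)) x)) x := by
      intro x
      have := (hasDerivAt_bernPoly (2*(n+1)+1) x).const_mul ((-1:ℝ)^(n+2))
      simpa using this
    have hg'' : ∀ x : ℝ, HasDerivAt (fun y => (-1:ℝ)^(n+2) * ((2*(n+1)+1) * bernPoly (2*(n+1)) y))
        ((-1)^(n+2) * ((2*(n+1)+1) * ((2*(n+1)) * bernPoly (2*n+1) x))) x := by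
      intro x
      have h0 := ((hasDerivAt_bernPoly (2*(n+1)) x).const_mul ((2*(n+1)+1 : ℝ))).const_mul
        ((-1:ℝ)^(n+2))
      have e : 2*(n+1) - 1 = 2*n+1 := by omega
      rw [e] at h0
      refine h0.congr_deriv ?_
      push_cast
      ring
    have hderiv1 : deriv g = fun x => (-1:ℝ)^(n+2) * ((2*(n+1)+1) * bernPoly (2*(n+1)) x) :=
      funext fun x => (hg' x).deriv
    have hconc : StrictConcaveOn ℝ (Icc (0:ℝ) (1/2)) g := by
      apply strictConcaveOn_of_deriv2_neg (convex_Icc _ _)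
      · exact fun x _ => ((hg' x).continuousAt).continuousWithinAt
      · intro x hx
        rw [interior_Icc] at hx
        have : deriv (deriv g) x
            = (-1)^(n+2) * ((2*(n+1)+1) * ((2*(n+1)) * bernPoly (2*n+1) x)) := by
          rw [hderiv1]; exact (hg'' x).deriv
        show deriv (deriv g) x < 0
        rw [this]
        have hih := ih x hx
        have hc : (0:ℝ) < (2*(n:ℝ)+3) * (2*(n:ℝ)+2) := by positivity
        have : ((-1:ℝ)^(n+2) : ℝ) = -(-1)^(n+1) := by ring
        rw [this]
        nlinarith [mul_pos hc hih]
    have h0 : g 0 = 0 := by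
      rw [hg]; simp [bernPoly_odd_zero (by omega : 1 ≤ n+1)]
    have hhalf : g (1/2) = 0 := by
      show (-1:ℝ)^(n+2) * bernPoly (2*(n+1)+1) (1/2) = 0
      rw [bernPoly_odd_half (n+1)]; ring
    have key : 0 < g t := by
      have := hconc.2 (show (0:ℝ) ∈ Icc (0:ℝ) (1/2) by norm_num [mem_Icc])
        (show (1/2:ℝ) ∈ Icc (0:ℝ) (1/2) by norm_num [mem_Icc])
        (show (0:ℝ) ≠ 1/2 by norm_num)
        (show (0:ℝ) < 1 - 2*t by linarith [ht.2]) (show (0:ℝ) < 2*t by linarith [ht.1])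
        (by ring)
      rw [h0, hhalf] at this
      simp only [smul_eq_mul, mul_zero, add_zero, smul_zero, zero_add] at this
      have ht2 : 2 * t * (1/2) = t := by ring
      rwa [ht2] at this
    have : ((-1:ℝ)^(n+1+1) : ℝ) = (-1)^(n+2) := by norm_num
    rw [this]
    exact key


noncomputable def Gp (n : ℕ) (t : ℝ) : ℝ :=
  (t - 1/2) * ((2*n+1) * bernPoly (2*n) t) - bernPoly (2*n+1) t

lemma hasDerivAt_Gp {n : ℕ} (hn : 1 ≤ n) (t : ℝ) :
    HasDerivAt (Gp n) ((t - 1/2) * ((2*n+1) * ((2*n) * bernPoly (2*n-1) t))) t := by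
  have hB := hasDerivAt_bernPoly (2*n) t
  have hB1 := hasDerivAt_bernPoly (2*n+1) t
  have hid : HasDerivAt (fun x : ℝ => x - 1/2) 1 t := by
    simpa using (hasDerivAt_id t).sub_const (1/2)
  have hprod := hid.mul (hB.const_mul ((2*n+1 : ℝ)))
  have h := hprod.sub hB1
  have e1 : (2*n+1) - 1 = 2*n := by omega
  rw [e1] at hB1
  refine (hprod.sub hB1).congr_deriv ?_
  push_cast
  ring

lemma Gp_half (n : ℕ) : Gp n (1/2) = 0 := by
  rw [Gp, bernPoly_odd_half]; ring

lemma signGp {n : ℕ} (hn : 1 ≤ n) : ∀ t ∈ Ioo (0:ℝ) (1/2), 0 < (-1)^n * Gp n t := by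
  obtain ⟨m, rfl⟩ : ∃ m, n = m + 1 := ⟨n - 1, by omega⟩
  intro t ht
  set f : ℝ → ℝ := fun t => (-1)^(m+2) * Gp (m+1) t with hf
  have hf' : ∀ x : ℝ, HasDerivAt f
      ((-1)^(m+2) * ((x - 1/2) * ((2*(m:ℝ)+3) * ((2*(m:ℝ)+2) * bernPoly (2*m+1) x)))) x := by
    intro x
    have h := (hasDerivAt_Gp (n := m+1) (by omega) x).const_mul ((-1:ℝ)^(m+2))
    have e : 2*(m+1) - 1 = 2*m+1 := by omega
    rw [e] at h
    refine h.congr_deriv ?_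
    push_cast
    ring
  have hmono : StrictMonoOn f (Icc (0:ℝ) (1/2)) := by
    apply strictMonoOn_of_deriv_pos (convex_Icc _ _)
    · exact fun x _ => ((hf' x).continuousAt).continuousWithinAt
    · intro x hx
      rw [interior_Icc] at hx
      rw [(hf' x).deriv]
      have hs := signB m x hx
      have hc : (0:ℝ) < (2*(m:ℝ)+3) * (2*(m:ℝ)+2) := by positivity
      have hx2 : x - 1/2 < 0 := by linarith [hx.2]
      have : ((-1:ℝ)^(m+2) : ℝ) = -(-1)^(m+1) := by ring
      rw [this]
      nlinarith [mul_pos (mul_pos hc hs) (show (0:ℝ) < 1/2 - x by linarith)]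
  have hlt : f t < f (1/2) := hmono (by constructor <;> [linarith [ht.1]; linarith [ht.2]])
    (by norm_num [mem_Icc]) ht.2
  have hzero : f (1/2) = 0 := by
    show (-1:ℝ)^(m+2) * Gp (m+1) (1/2) = 0
    rw [Gp_half]; ring
  rw [hzero] at hlt
  have : ((-1:ℝ)^(m+1) : ℝ) = -(-1)^(m+2) := by ring
  rw [this]
  simp only [hf] at hlt
  nlinarith [hlt]

noncomputable def Rf (n : ℕ) (t : ℝ) : ℝ := bernPoly (2*n+1) t / (t - 1/2)

lemma hasDerivAt_Rf (n : ℕ) {t : ℝ} (ht : t ≠ 1/2) :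
    HasDerivAt (Rf n) (Gp n t / (t - 1/2)^2) t := by
  have hB := hasDerivAt_bernPoly (2*n+1) t
  have e1 : (2*n+1) - 1 = 2*n := by omega
  rw [e1] at hB
  have hid : HasDerivAt (fun x : ℝ => x - 1/2) 1 t := by
    simpa using (hasDerivAt_id t).sub_const (1/2)
  have h := hB.div hid (sub_ne_zero.mpr ht)
  refine h.congr_deriv ?_
  rw [Gp]
  push_cast
  ring

lemma Rf_zero {n : ℕ} (hn : 1 ≤ n) : Rf n 0 = 0 := by
  rw [Rf, bernPoly_odd_zero hn, zero_div]


lemma div_div_cancel_aux {a b c : ℝ} (hc : c ≠ 0) : (a/c)/(b/c) = a/b := by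
  rcases eq_or_ne b 0 with rfl | hb
  · simp
  · field_simp

lemma anti_ratio_left {a b : ℝ} (hab : a < b) {F G F' G' : ℝ → ℝ} {e : ℝ}
    (hF : ∀ x ∈ Ico a b, HasDerivAt F (F' x) x)
    (hG : ∀ x ∈ Ico a b, HasDerivAt G (G' x) x)
    (hFa : F a = 0) (hGa : G a = 0)
    (hG' : ∀ x ∈ Ioo a b, 0 < e * G' x)
    (hr : StrictAntiOn (fun x => F' x / G' x) (Ioo a b)) :
    StrictAntiOn (fun x => F x / G x) (Ioo a b) := by
  have he : e ≠ 0 := by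
    intro h
    have := hG' ((a+b)/2) (by constructor <;> linarith)
    rw [h, zero_mul] at this; exact lt_irrefl 0 this
  have he2 : 0 < e * e := mul_self_pos.mpr he
  -- e * G is strictly monotone on Ico a b
  have hmono : StrictMonoOn (fun x => e * G x) (Ico a b) := by
    apply strictMonoOn_of_deriv_pos (convex_Ico _ _)
    · exact fun x hx => (((hG x hx).const_mul e).continuousAt).continuousWithinAt
    · intro x hx
      rw [interior_Ico] at hx
      rw [((hG x (Ioo_subset_Ico_self hx)).const_mul e).deriv]
      exact hG' x hx
  have hGpos : ∀ x ∈ Ioo a b, 0 < e * G x := by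
    intro x hx
    have := hmono (left_mem_Ico.mpr hab) (Ioo_subset_Ico_self hx) hx.1
    simpa [hGa] using this
  have hGne : ∀ x ∈ Ioo a b, G x ≠ 0 := by
    intro x hx h0
    have := hGpos x hx
    rw [h0, mul_zero] at this; exact lt_irrefl 0 this
  have key : ∀ x ∈ Ioo a b, F' x * G x - F x * G' x < 0 := by
    intro x hx
    obtain ⟨ξ, hξ, hc⟩ := exists_ratio_hasDerivAt_eq_ratio_slope F F' hx.1
      (fun y hy => (hF y ⟨hy.1, lt_of_le_of_lt hy.2 hx.2⟩).continuousAt.continuousWithinAt)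
      (fun y hy => hF y ⟨le_of_lt hy.1, lt_trans hy.2 hx.2⟩)
      G G'
      (fun y hy => (hG y ⟨hy.1, lt_of_le_of_lt hy.2 hx.2⟩).continuousAt.continuousWithinAt)
      (fun y hy => hG y ⟨le_of_lt hy.1, lt_trans hy.2 hx.2⟩)
    rw [hFa, hGa, sub_zero, sub_zero] at hc
    -- hc : G x * F' ξ = F x * G' ξ
    have hξmem : ξ ∈ Ioo a b := ⟨hξ.1, lt_trans hξ.2 hx.2⟩
    have hrlt : F' x / G' x < F' ξ / G' ξ := hr hξmem hx hξ.2
    have hGx' := hG' x hx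
    have hGξ' := hG' ξ hξmem
    have h2 : F' x * G' ξ < F' ξ * G' x := by
      have h3 : (e * F' x) / (e * G' x) < (e * F' ξ) / (e * G' ξ) := by
        rwa [mul_div_mul_left _ _ he, mul_div_mul_left _ _ he]
      rw [div_lt_div_iff₀ hGx' hGξ'] at h3
      have h4 : (e*e) * (F' x * G' ξ) < (e*e) * (F' ξ * G' x) := by nlinarith [h3]
      exact (mul_lt_mul_iff_right₀ he2).mp h4
    have hGx := hGpos x hx
    nlinarith [mul_pos hGx (sub_pos.mpr h2), hc, hGξ']
  intro x hx y hy hxy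
  -- use derivative of quotient
  have hQ : ∀ z ∈ Ioo a b, HasDerivAt (fun w => F w / G w)
      ((F' z * G z - F z * G' z) / (G z)^2) z := by
    intro z hz
    exact (hF z (Ioo_subset_Ico_self hz)).div (hG z (Ioo_subset_Ico_self hz)) (hGne z hz)
  have : StrictAntiOn (fun w => F w / G w) (Ioo a b) := by
    apply strictAntiOn_of_deriv_neg (convex_Ioo _ _)
    · exact fun z hz => ((hQ z hz).continuousAt).continuousWithinAt
    · intro z hz
      rw [isOpen_Ioo.interior_eq] at hz
      rw [(hQ z hz).deriv]
      apply div_neg_of_neg_of_pos (key z hz)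
      have := hGne z hz
      positivity
  exact this hx hy hxy

lemma anti_ratio_right {a b : ℝ} (hab : a < b) {F G F' G' : ℝ → ℝ} {e : ℝ}
    (hF : ∀ x ∈ Ioc a b, HasDerivAt F (F' x) x)
    (hG : ∀ x ∈ Ioc a b, HasDerivAt G (G' x) x)
    (hFb : F b = 0) (hGb : G b = 0)
    (hG' : ∀ x ∈ Ioo a b, 0 < e * G' x)
    (hr : StrictAntiOn (fun x => F' x / G' x) (Ioo a b)) :
    StrictAntiOn (fun x => F x / G x) (Ioo a b) := by
  have he : e ≠ 0 := by
    intro h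
    have := hG' ((a+b)/2) (by constructor <;> linarith)
    rw [h, zero_mul] at this; exact lt_irrefl 0 this
  have he2 : 0 < e * e := mul_self_pos.mpr he
  have hmono : StrictMonoOn (fun x => e * G x) (Ioc a b) := by
    apply strictMonoOn_of_deriv_pos (convex_Ioc _ _)
    · exact fun x hx => (((hG x hx).const_mul e).continuousAt).continuousWithinAt
    · intro x hx
      rw [interior_Ioc] at hx
      rw [((hG x (Ioo_subset_Ioc_self hx)).const_mul e).deriv]
      exact hG' x hx
  have hGneg : ∀ x ∈ Ioo a b, e * G x < 0 := by
    intro x hx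
    have := hmono (Ioo_subset_Ioc_self hx) (right_mem_Ioc.mpr hab) hx.2
    simpa [hGb] using this
  have hGne : ∀ x ∈ Ioo a b, G x ≠ 0 := by
    intro x hx h0
    have := hGneg x hx
    rw [h0, mul_zero] at this; exact lt_irrefl 0 this
  have key : ∀ x ∈ Ioo a b, F' x * G x - F x * G' x < 0 := by
    intro x hx
    obtain ⟨ξ, hξ, hc⟩ := exists_ratio_hasDerivAt_eq_ratio_slope F F' hx.2
      (fun y hy => (hF y ⟨lt_of_lt_of_le hx.1 hy.1, hy.2⟩).continuousAt.continuousWithinAt)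
      (fun y hy => hF y ⟨lt_trans hx.1 hy.1, le_of_lt hy.2⟩)
      G G'
      (fun y hy => (hG y ⟨lt_of_lt_of_le hx.1 hy.1, hy.2⟩).continuousAt.continuousWithinAt)
      (fun y hy => hG y ⟨lt_trans hx.1 hy.1, le_of_lt hy.2⟩)
    rw [hFb, hGb, zero_sub, zero_sub] at hc
    -- hc : -G x * F' ξ = -F x * G' ξ
    have hc' : G x * F' ξ = F x * G' ξ := by linarith [hc]
    have hξmem : ξ ∈ Ioo a b := ⟨lt_trans hx.1 hξ.1, hξ.2⟩
    have hrlt : F' ξ / G' ξ < F' x / G' x := hr hx hξmem hξ.1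
    have hGx' := hG' x hx
    have hGξ' := hG' ξ hξmem
    have h2 : F' ξ * G' x < F' x * G' ξ := by
      have h3 : (e * F' ξ) / (e * G' ξ) < (e * F' x) / (e * G' x) := by
        rwa [mul_div_mul_left _ _ he, mul_div_mul_left _ _ he]
      rw [div_lt_div_iff₀ hGξ' hGx'] at h3
      have h4 : (e*e) * (F' ξ * G' x) < (e*e) * (F' x * G' ξ) := by nlinarith [h3]
      exact (mul_lt_mul_iff_right₀ he2).mp h4
    have hGx := hGneg x hx
    nlinarith [mul_neg_of_neg_of_pos hGx (sub_pos.mpr h2), hc', hGξ']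
  intro x hx y hy hxy
  have hQ : ∀ z ∈ Ioo a b, HasDerivAt (fun w => F w / G w)
      ((F' z * G z - F z * G' z) / (G z)^2) z := by
    intro z hz
    exact (hF z (Ioo_subset_Ioc_self hz)).div (hG z (Ioo_subset_Ioc_self hz)) (hGne z hz)
  have : StrictAntiOn (fun w => F w / G w) (Ioo a b) := by
    apply strictAntiOn_of_deriv_neg (convex_Ioo _ _)
    · exact fun z hz => ((hQ z hz).continuousAt).continuousWithinAt
    · intro z hz
      rw [isOpen_Ioo.interior_eq] at hz
      rw [(hQ z hz).deriv]
      apply div_neg_of_neg_of_pos (key z hz)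
      have := hGne z hz
      positivity
  exact this hx hy hxy


lemma ratio_anti (m : ℕ) :
    StrictAntiOn (fun t => Rf (m+1) t / Rf m t) (Ioo (0:ℝ) (1/2)) := by
  induction m with
  | zero =>
    have hA : StrictAntiOn (Rf 1) (Ioo (0:ℝ) (1/2)) := by
      apply strictAntiOn_of_deriv_neg (convex_Ioo _ _)
      · intro x hx
        exact ((hasDerivAt_Rf 1 (ne_of_lt hx.2)).continuousAt).continuousWithinAt
      · intro x hx
        rw [isOpen_Ioo.interior_eq] at hx
        rw [(hasDerivAt_Rf 1 (ne_of_lt hx.2)).deriv]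
        apply div_neg_of_neg_of_pos
        · have := signGp (n := 1) le_rfl x hx
          simpa using by nlinarith [this]
        · have : x - 1/2 ≠ 0 := sub_ne_zero.mpr (ne_of_lt hx.2)
          positivity
    intro x hx y hy hxy
    have hR0 : ∀ z ∈ Ioo (0:ℝ) (1/2), Rf 0 z = 1 := by
      intro z hz
      rw [Rf]
      norm_num [bernPoly_one_eval]
      exact sub_ne_zero.mpr (ne_of_lt hz.2)
    simp only [hR0 x hx, hR0 y hy, div_one]
    exact hA hx hy hxy
  | succ m ih =>
    -- Step 1: ratio of Gp's is strictly anti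
    have hrG : StrictAntiOn (fun t => Gp (m+2) t / Gp (m+1) t) (Ioo (0:ℝ) (1/2)) := by
      apply anti_ratio_right (F' := fun t =>
          (t - 1/2) * ((2*(m:ℝ)+5) * ((2*(m:ℝ)+4) * bernPoly (2*(m+1)+1) t)))
        (G' := fun t => (t - 1/2) * ((2*(m:ℝ)+3) * ((2*(m:ℝ)+2) * bernPoly (2*m+1) t)))
        (e := (-1)^m) (by norm_num : (0:ℝ) < 1/2)
      · intro x _
        have h := hasDerivAt_Gp (n := m+2) (by omega) x
        have e : 2*(m+2) - 1 = 2*(m+1)+1 := by omega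
        rw [e] at h
        convert h using 1
        push_cast; ring
      · intro x _
        have h := hasDerivAt_Gp (n := m+1) (by omega) x
        have e : 2*(m+1) - 1 = 2*m+1 := by omega
        rw [e] at h
        convert h using 1
        push_cast; ring
      · exact Gp_half (m+2)
      · exact Gp_half (m+1)
      · intro x hx
        have hs := signB m x hx
        have hc : (0:ℝ) < (2*(m:ℝ)+3) * (2*(m:ℝ)+2) := by positivity
        have hx2 : (0:ℝ) < 1/2 - x := by linarith [hx.2]
        have hme : ((-1:ℝ)^m : ℝ) = -(-1)^(m+1) := by ring
        rw [hme]
        nlinarith [mul_pos (mul_pos hc hs) hx2]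
      · -- derivative ratio equals positive constant times Rf-ratio
        intro x hx y hy hxy
        simp only
        have hconv : ∀ z ∈ Ioo (0:ℝ) (1/2),
            ((z - 1/2) * ((2*(m:ℝ)+5) * ((2*(m:ℝ)+4) * bernPoly (2*(m+1)+1) z))) /
            ((z - 1/2) * ((2*(m:ℝ)+3) * ((2*(m:ℝ)+2) * bernPoly (2*m+1) z)))
            = (((2*(m:ℝ)+5) * (2*(m:ℝ)+4)) / ((2*(m:ℝ)+3) * (2*(m:ℝ)+2)))
              * (Rf (m+1) z / Rf m z) := by
          intro z hz
          have hz2 : z - 1/2 ≠ 0 := sub_ne_zero.mpr (ne_of_lt hz.2)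
          rw [mul_div_mul_left _ _ hz2, Rf, Rf, div_div_cancel_aux hz2]
          rw [div_mul_div_comm]
          congr 1 <;> ring
        rw [hconv x hx, hconv y hy]
        have hcpos : (0:ℝ) < ((2*(m:ℝ)+5) * (2*(m:ℝ)+4)) / ((2*(m:ℝ)+3) * (2*(m:ℝ)+2)) := by
          positivity
        exact (mul_lt_mul_iff_right₀ hcpos).mpr (ih hx hy hxy)
    -- Step 2: conclude for Rf ratio via left anchor
    have main : StrictAntiOn (fun t => Rf (m+2) t / Rf (m+1) t) (Ioo (0:ℝ) (1/2)) := by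
      apply anti_ratio_left (F' := fun t => Gp (m+2) t / (t - 1/2)^2)
        (G' := fun t => Gp (m+1) t / (t - 1/2)^2)
        (e := (-1)^(m+1)) (by norm_num : (0:ℝ) < 1/2)
      · intro x hx
        exact hasDerivAt_Rf (m+2) (ne_of_lt hx.2)
      · intro x hx
        exact hasDerivAt_Rf (m+1) (ne_of_lt hx.2)
      · exact Rf_zero (by omega)
      · exact Rf_zero (by omega)
      · intro x hx
        have hs := signGp (n := m+1) (by omega) x hx
        have hx2 : x - 1/2 ≠ 0 := sub_ne_zero.mpr (ne_of_lt hx.2)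
        have hsq : (0:ℝ) < (x - 1/2)^2 := by positivity
        rw [mul_div_assoc']
        exact div_pos hs hsq
      · intro x hx y hy hxy
        simp only
        have hconv : ∀ z ∈ Ioo (0:ℝ) (1/2),
            (Gp (m+2) z / (z - 1/2)^2) / (Gp (m+1) z / (z - 1/2)^2)
            = Gp (m+2) z / Gp (m+1) z := by
          intro z hz
          have hz2 : z - 1/2 ≠ 0 := sub_ne_zero.mpr (ne_of_lt hz.2)
          exact div_div_cancel_aux (by positivity)
        rw [hconv x hx, hconv y hy]
        exact hrG hx hy hxy
    exact main


theorem bernoulli_poly_ratio_monotone (n : ℕ) (hn : 0 < n) :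
    StrictMonoOn (fun t : ℝ => bernPoly (2 * n - 1) t / bernPoly (2 * n + 1) t)
      (Set.Ioo (0 : ℝ) (1 / 2)) ∧
    StrictAntiOn (fun t : ℝ => bernPoly (2 * n - 1) t / bernPoly (2 * n + 1) t)
      (Set.Ioo (1 / 2 : ℝ) 1) := by
  obtain ⟨m, rfl⟩ : ∃ m, n = m + 1 := ⟨n - 1, by omega⟩
  have eidx : 2 * (m+1) - 1 = 2*m+1 := by omega
  simp only [eidx]
  have hmono : StrictMonoOn (fun t : ℝ => bernPoly (2*m+1) t / bernPoly (2*(m+1)+1) t)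
      (Set.Ioo (0 : ℝ) (1/2)) := by
    intro x hx y hy hxy
    have K := ratio_anti m hx hy hxy
    -- pointwise identification of the Rf-ratio with B-ratio, and its negativity
    have hfacts : ∀ z ∈ Ioo (0:ℝ) (1/2),
        Rf (m+1) z / Rf m z = bernPoly (2*(m+1)+1) z / bernPoly (2*m+1) z
        ∧ bernPoly (2*(m+1)+1) z / bernPoly (2*m+1) z < 0
        ∧ bernPoly (2*m+1) z ≠ 0 ∧ bernPoly (2*(m+1)+1) z ≠ 0 := by
      intro z hz
      have hz2 : z - 1/2 ≠ 0 := sub_ne_zero.mpr (ne_of_lt hz.2)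
      have h1 := signB (m+1) z hz
      have h2 := signB m z hz
      have hB1 : bernPoly (2*(m+1)+1) z ≠ 0 := by
        intro h0; rw [h0, mul_zero] at h1; exact lt_irrefl 0 h1
      have hB2 : bernPoly (2*m+1) z ≠ 0 := by
        intro h0; rw [h0, mul_zero] at h2; exact lt_irrefl 0 h2
      refine ⟨?_, ?_, hB2, hB1⟩
      · rw [Rf, Rf, div_div_cancel_aux hz2]
      · have hee : ((-1:ℝ)^(m+1+1)) * ((-1)^(m+1)) = -1 := by
          rw [← pow_add]
          exact Odd.neg_one_pow ⟨m+1, by ring⟩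
        have hmm : ((-1:ℝ)^(m+1+1) * bernPoly (2*(m+1)+1) z) * ((-1)^(m+1) * bernPoly (2*m+1) z)
            = -(bernPoly (2*(m+1)+1) z * bernPoly (2*m+1) z) := by
          rw [mul_mul_mul_comm, hee]; ring
        have hprod := mul_pos h1 h2
        rw [hmm] at hprod
        have hBB : bernPoly (2*(m+1)+1) z * bernPoly (2*m+1) z < 0 := by linarith
        have : bernPoly (2*(m+1)+1) z / bernPoly (2*m+1) z
            = (bernPoly (2*(m+1)+1) z * bernPoly (2*m+1) z) / (bernPoly (2*m+1) z)^2 := by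
          rw [pow_two, mul_div_mul_right _ _ hB2]
        rw [this]
        apply div_neg_of_neg_of_pos hBB
        positivity
    obtain ⟨hx1, hx2, hx3, hx4⟩ := hfacts x hx
    obtain ⟨hy1, hy2, hy3, hy4⟩ := hfacts y hy
    simp only at K
    rw [hx1, hy1] at K
    -- K : B₊ y / B₋ y < B₊ x / B₋ x ; both negative. Conclude 1/(B₊x/B₋x) < 1/(B₊y/B₋y)
    set u := bernPoly (2*(m+1)+1) x / bernPoly (2*m+1) x with hu
    set v := bernPoly (2*(m+1)+1) y / bernPoly (2*m+1) y with hv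
    have hgoalx : bernPoly (2*m+1) x / bernPoly (2*(m+1)+1) x = 1/u := by
      rw [hu, one_div_div]
    have hgoaly : bernPoly (2*m+1) y / bernPoly (2*(m+1)+1) y = 1/v := by
      rw [hv, one_div_div]
    simp only
    rw [hgoalx, hgoaly]
    have hune : u ≠ 0 := ne_of_lt hx2
    have hvne : v ≠ 0 := ne_of_lt hy2
    have huv : 0 < u * v := mul_pos_of_neg_of_neg hx2 hy2
    have e1 : (1/u) * (u*v) = v := by field_simp
    have e2 : (1/v) * (u*v) = u := by field_simp
    nlinarith [K, huv, e1, e2]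
  constructor
  · exact hmono
  · intro x hx y hy hxy
    have hrefl : ∀ z : ℝ, bernPoly (2*m+1) (1-z) / bernPoly (2*(m+1)+1) (1-z)
        = bernPoly (2*m+1) z / bernPoly (2*(m+1)+1) z := by
      intro z
      rw [bernPoly_one_sub, bernPoly_one_sub,
        Odd.neg_one_pow ⟨m, by ring⟩, Odd.neg_one_pow ⟨m+1, by ring⟩]
      rw [neg_one_mul, neg_one_mul, neg_div_neg_eq]
    have hy' : (1-y) ∈ Ioo (0:ℝ) (1/2) := ⟨by linarith [hy.2], by linarith [hy.1]⟩
    have hx' : (1-x) ∈ Ioo (0:ℝ) (1/2) := ⟨by linarith [hx.2], by linarith [hx.1]⟩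
    have := hmono hy' hx' (by linarith)
    simp only at this ⊢
    rw [hrefl (y)] at this
    rw [hrefl (x)] at this
    exact this
end

section
/- For every real x with 0 < |x| < 2π, the identity ln(2(1 − cos x)/x²) = −∑_{k=1}^∞ (|B_{2k}|/k) · x^{2k}/(2k)! holds, where the series on the right converges. -/
open Real Filter Finset Topology

theorem log_cos_remainder_series (x : ℝ) (hx0 : 0 < |x|) (hx : |x| < 2 * Real.pi) :
    HasSum
      (fun k : ℕ =>
        (|(bernoulli (2 * (k + 1)) : ℝ)| / (k + 1)) * x ^ (2 * (k + 1)) /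
          (Nat.factorial (2 * (k + 1))))
      (- Real.log (2 * (1 - Real.cos x) / x ^ 2)) := by
  have hπ := Real.pi_pos
  have hxne : x ≠ 0 := by intro h; simp [h] at hx0
  set a : ℕ → ℝ := fun n => x ^ 2 / ((2 * π) ^ 2 * ((n : ℝ) + 1) ^ 2) with ha
  have hx2 : x ^ 2 < (2 * π) ^ 2 := by
    rw [← sq_abs x]; nlinarith [abs_nonneg x]
  have han : ∀ n : ℕ, 0 ≤ a n ∧ a n < 1 := by
    intro n
    refine ⟨by positivity, ?_⟩
    rw [ha]
    have h1 : (1:ℝ) ≤ ((n:ℝ)+1)^2 := by nlinarith [Nat.cast_nonneg (α := ℝ) n]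
    rw [div_lt_one (by positivity)]
    nlinarith [sq_nonneg x]
  -- Euler product for sin(x/2)/(x/2)
  have hE := Real.tendsto_euler_sin_prod (x / (2 * π))
  have h1 : π * (x / (2 * π)) = x / 2 := by field_simp
  have h2 : ∀ j : ℕ, (x / (2 * π)) ^ 2 / ((j : ℝ) + 1) ^ 2 = a j := fun j => by
    rw [ha, div_pow, div_div]
  rw [h1] at hE
  simp only [h2] at hE
  have hprod : Tendsto (fun n : ℕ => ∏ j ∈ Finset.range n, (1 - a j)) atTop
      (𝓝 (Real.sin (x / 2) / (x / 2))) := by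
    have := hE.const_mul (2 / x)
    convert this using 2 with n
    · field_simp
    · field_simp
  have hS : Real.sin (x / 2) / (x / 2) ≠ 0 := by
    have habs := abs_lt.mp hx
    have hs : Real.sin (x / 2) ≠ 0 := by
      intro h
      rw [Real.sin_eq_zero_iff_of_lt_of_lt (by linarith) (by linarith)] at h
      exact hxne (by linarith)
    exact div_ne_zero hs (by simpa using hxne)
  -- log of the partial products
  have hlog : Tendsto (fun n : ℕ => ∑ j ∈ Finset.range n, Real.log (1 - a j)) atTop
      (𝓝 (Real.log (Real.sin (x / 2) / (x / 2)))) := by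
    have hc := (Real.continuousAt_log hS).tendsto.comp hprod
    convert hc using 2 with n
    rw [Function.comp_apply, Real.log_prod]
    intro j _
    have := (han j).2
    intro h; linarith [(han j).1, h]
  set S : ℝ := Real.sin (x / 2) / (x / 2) with hSdef
  -- HasSum of -log (1 - a n)
  have hlogle : ∀ n, 0 ≤ - Real.log (1 - a n) := by
    intro n
    have h1 := (han n).1; have h2 := (han n).2
    have : Real.log (1 - a n) ≤ 0 := Real.log_nonpos (by linarith) (by linarith)
    linarith
  have hN : HasSum (fun n => - Real.log (1 - a n)) (- Real.log S) := by
    rw [hasSum_iff_tendsto_nat_of_nonneg hlogle]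
    simpa [Finset.sum_neg_distrib] using hlog.neg
  have hfib : ∀ n, HasSum (fun k : ℕ => a n ^ (k + 1) / (k + 1)) (- Real.log (1 - a n)) := by
    intro n
    exact Real.hasSum_pow_div_log_of_abs_lt_one
      (by rw [abs_of_nonneg (han n).1]; exact (han n).2)
  set f : ℕ × ℕ → ℝ := fun p => a p.1 ^ (p.2 + 1) / (p.2 + 1) with hf
  have hfnn : 0 ≤ f := by
    intro p
    have := (han p.1).1
    positivity
  have hsumf : Summable f := by
    rw [summable_prod_of_nonneg hfnn]
    refine ⟨fun n => (hfib n).summable, ?_⟩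
    have : (fun n => ∑' k, f (n, k)) = fun n => - Real.log (1 - a n) := by
      funext n; exact (hfib n).tsum_eq
    rw [this]
    exact hN.summable
  have hfsum : HasSum f (- Real.log S) := by
    have h0 := hsumf.hasSum
    have h1 : HasSum (fun n => - Real.log (1 - a n)) (∑' p, f p) :=
      h0.prod_fiberwise fun n => hfib n
    rwa [h1.unique hN] at h0
  have hswap : HasSum (f ∘ (Equiv.prodComm ℕ ℕ)) (- Real.log S) :=
    (Equiv.prodComm ℕ ℕ).hasSum_iff.mpr hfsum
  -- zeta-value fibers
  have hfibk : ∀ k : ℕ, HasSum (fun n : ℕ => a n ^ (k + 1) / ((k:ℝ) + 1))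
      ((x ^ (2 * (k + 1)) / ((2 * π) ^ (2 * (k + 1)) * ((k:ℝ) + 1))) *
        ((-1 : ℝ) ^ (k + 1 + 1) * (2 : ℝ) ^ (2 * (k + 1) - 1) * π ^ (2 * (k + 1)) *
          (bernoulli (2 * (k + 1)) : ℝ) / (Nat.factorial (2 * (k + 1)) : ℝ))) := by
    intro k
    have hz := hasSum_zeta_nat (k := k + 1) (Nat.succ_ne_zero k)
    have hz1 : HasSum (fun n : ℕ => 1 / ((n : ℝ) + 1) ^ (2 * (k + 1)))
        ((-1 : ℝ) ^ (k + 1 + 1) * (2 : ℝ) ^ (2 * (k + 1) - 1) * π ^ (2 * (k + 1)) *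
          (bernoulli (2 * (k + 1)) : ℝ) / (Nat.factorial (2 * (k + 1)) : ℝ)) := by
      have := (hasSum_nat_add_iff (f := fun n : ℕ => 1 / ((n : ℝ)) ^ (2 * (k + 1))) 1).mpr
        (by simpa using hz)
      simpa using this
    have := hz1.mul_left (x ^ (2 * (k + 1)) / ((2 * π) ^ (2 * (k + 1)) * ((k:ℝ) + 1)))
    convert this using 2 with n
    · rfl
    have hn1 : ((n:ℝ) + 1) ≠ 0 := by positivity
    have hk1 : ((k:ℝ) + 1) ≠ 0 := by positivity
    rw [ha, div_pow, ← pow_mul, mul_pow, ← pow_mul, ← pow_mul]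
    rw [mul_comm 2 (k+1)]
    field_simp
  have hmain : HasSum (fun k : ℕ =>
      (x ^ (2 * (k + 1)) / ((2 * π) ^ (2 * (k + 1)) * ((k:ℝ) + 1))) *
        ((-1 : ℝ) ^ (k + 1 + 1) * (2 : ℝ) ^ (2 * (k + 1) - 1) * π ^ (2 * (k + 1)) *
          (bernoulli (2 * (k + 1)) : ℝ) / (Nat.factorial (2 * (k + 1)) : ℝ)))
      (- Real.log S) :=
    hswap.prod_fiberwise fun k => hfibk k
  have hfinal := hmain.mul_left 2
  -- identify terms and value
  have hterm : ∀ k : ℕ,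
      (|(bernoulli (2 * (k + 1)) : ℝ)| / (k + 1)) * x ^ (2 * (k + 1)) /
          (Nat.factorial (2 * (k + 1))) =
        2 * ((x ^ (2 * (k + 1)) / ((2 * π) ^ (2 * (k + 1)) * ((k:ℝ) + 1))) *
          ((-1 : ℝ) ^ (k + 1 + 1) * (2 : ℝ) ^ (2 * (k + 1) - 1) * π ^ (2 * (k + 1)) *
            (bernoulli (2 * (k + 1)) : ℝ) / (Nat.factorial (2 * (k + 1)) : ℝ))) := by
    intro k
    set B : ℝ := (bernoulli (2 * (k + 1)) : ℝ) with hB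
    set Z : ℝ := ((-1 : ℝ) ^ (k + 1 + 1) * (2 : ℝ) ^ (2 * (k + 1) - 1) * π ^ (2 * (k + 1)) *
        B / (Nat.factorial (2 * (k + 1)) : ℝ)) with hZ
    have hz := hasSum_zeta_nat (k := k + 1) (Nat.succ_ne_zero k)
    have hz1 : HasSum (fun n : ℕ => 1 / ((n : ℝ) + 1) ^ (2 * (k + 1))) Z := by
      have := (hasSum_nat_add_iff (f := fun n : ℕ => 1 / ((n : ℝ)) ^ (2 * (k + 1))) 1).mpr
        (by simpa using hz)
      simpa using this
    have hZpos : 0 < Z := by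
      have h1 : (fun n : ℕ => 1 / ((n : ℝ) + 1) ^ (2 * (k + 1))) 0 ≤ Z :=
        le_hasSum hz1 0 (fun j _ => by positivity)
      simp at h1
      linarith
    have hZ' : Z = ((-1 : ℝ) ^ k * B) *
        ((2 : ℝ) ^ (2 * (k + 1) - 1) * π ^ (2 * (k + 1)) /
          (Nat.factorial (2 * (k + 1)) : ℝ)) := by
      rw [hZ, pow_add]; ring
    have hsign : 0 < (-1 : ℝ) ^ k * B := by
      by_contra h
      push_neg at h
      have hq : (0:ℝ) < (2 : ℝ) ^ (2 * (k + 1) - 1) * π ^ (2 * (k + 1)) /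
          (Nat.factorial (2 * (k + 1)) : ℝ) := by positivity
      have : Z ≤ 0 := by rw [hZ']; exact mul_nonpos_iff.mpr (Or.inr ⟨h, hq.le⟩)
      linarith
    have habs : |B| = (-1 : ℝ) ^ k * B := by
      rw [← abs_of_pos hsign, abs_mul, abs_pow, abs_neg, abs_one, one_pow, one_mul]
    have hm : 2 * (k + 1) - 1 = 2 * k + 1 := by omega
    rw [habs]
    rw [hZ', hm]
    have hfac : ((Nat.factorial (2 * (k + 1)) : ℝ)) ≠ 0 := by positivity
    have hk1 : ((k:ℝ) + 1) ≠ 0 := by positivity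
    have hπne : π ≠ 0 := Real.pi_ne_zero
    rw [mul_pow]
    field_simp
    ring
  -- identify the sum value
  have hval : - Real.log (2 * (1 - Real.cos x) / x ^ 2) = 2 * (- Real.log S) := by
    have hc := Real.cos_two_mul (x / 2)
    rw [show 2 * (x / 2) = x by ring] at hc
    have hsq := Real.sin_sq_add_cos_sq (x / 2)
    have hid : 2 * (1 - Real.cos x) / x ^ 2 = S ^ 2 := by
      rw [hSdef, div_pow]
      have h4 : 1 - Real.cos x = 2 * Real.sin (x / 2) ^ 2 := by nlinarith
      rw [h4]
      field_simp
    rw [hid, hSdef, Real.log_pow]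
    push_cast
    ring
  rw [hval]
  have : (fun k : ℕ =>
      (|(bernoulli (2 * (k + 1)) : ℝ)| / (k + 1)) * x ^ (2 * (k + 1)) /
        (Nat.factorial (2 * (k + 1)))) = fun k : ℕ =>
      2 * ((x ^ (2 * (k + 1)) / ((2 * π) ^ (2 * (k + 1)) * ((k:ℝ) + 1))) *
        ((-1 : ℝ) ^ (k + 1 + 1) * (2 : ℝ) ^ (2 * (k + 1) - 1) * π ^ (2 * (k + 1)) *
          (bernoulli (2 * (k + 1)) : ℝ) / (Nat.factorial (2 * (k + 1)) : ℝ))) := by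
    funext k; exact hterm k
  rw [this]
  exact hfinal
end
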